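/- arXiv:1203.0140 — 6 statements merged into one kernel-verified Lean document; each statement's English description precedes it below -/
import Mathlib

section
/- Let S_λ be a weighted shift on a directed tree T with weights λ = {λ_v}_{v∈V°}, and fix u ∈ V and n ∈ ℕ. Then: (i) e_u ∈ D(S_λⁿ) if and only if Σ_{v ∈ Chi^⟨m⟩(u)} |λ_{u|v}|² < ∞ for all integers m with 1 ≤ m ≤ n; (ii) if e_u ∈ D(S_λⁿ), then S_λⁿ e_u = Σ_{v ∈ Chi^⟨n⟩(u)} λ_{u|v} e_v; (iii) if e_u ∈ D(S_λⁿ), then ‖S_λⁿ e_u‖² = Σ_{v ∈ Chi^⟨n⟩(u)} |λ_{u|v}|². -/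
open Filter
open scoped ENNReal InnerProductSpace ComplexConjugate

attribute [local instance] Classical.propDecidable

noncomputable section

namespace Paper

universe u

/-- A directed tree: a directed graph which is connected (as an undirected graph), has no
(directed) circuits, and in which every vertex has at most one parent. -/
structure DirectedTree (V : Type*) where
  E : V → V → Prop
  connected : ∀ u v : V, Relation.ReflTransGen (fun a b => E a b ∨ E b a) u v
  noCircuits : ∀ v : V, ¬ Relation.TransGen E v v
  par_unique : ∀ ⦃u₁ u₂ v : V⦄, E u₁ v → E u₂ v → u₁ = u₂

namespace DirectedTree

variable {V : Type*} (t : DirectedTree V)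

/-- The set of children of a vertex. -/
def chi (u : V) : Set V := {v | t.E u v}

/-- `v` has a parent, i.e. `v ∈ V°`. -/
def hasPar (v : V) : Prop := ∃ u, t.E u v

/-- The parent partial function, as a total function with junk value `v` at parentless
vertices. -/
noncomputable def par (v : V) : V := if h : t.hasPar v then h.choose else v

/-- Children of a set of vertices. -/
def chiSet (W : Set V) : Set V := {v | ∃ u ∈ W, t.E u v}

/-- `n`-fold children of a set of vertices. -/
def chiIter : ℕ → Set V → Set V
  | 0, W => W
  | n + 1, W => t.chiSet (chiIter n W)

/-- `Chi^⟨n⟩(u)`. -/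
def chin (n : ℕ) (u : V) : Set V := t.chiIter n {u}

/-- The descendants of a vertex. -/
def des (u : V) : Set V := ⋃ n : ℕ, t.chin n u

/-- `λ_{u∣v} = ∏_{j=0}^{n-1} λ_{par^j(v)}` for `v ∈ Chi^⟨n⟩(u)`. -/
noncomputable def wprod (lam : V → ℂ) (n : ℕ) (v : V) : ℂ :=
  ∏ j ∈ Finset.range n, lam (t.par^[j] v)

end DirectedTree

/-- The Hilbert space `ℓ²(V)`. -/
abbrev H2 (V : Type*) := lp (fun _ : V => ℂ) 2

/-- The basis vector `e_u ∈ ℓ²(V)`. -/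
noncomputable def evec {V : Type*} (u : V) : H2 V :=
  haveI := Classical.decEq V
  lp.single 2 u 1

/-- The linear subspace `E = lin{e_u : u ∈ V}`. -/
noncomputable def espan (V : Type*) : Submodule ℂ (H2 V) :=
  Submodule.span ℂ (Set.range (evec : V → H2 V))

/-- The map `Λ_T` on all functions `V → ℂ`:
`(Λ_T f)(v) = λ_v f(par(v))` for `v ∈ V°` and `0` at the root. -/
noncomputable def lamLin {V : Type*} (t : DirectedTree V) (lam : V → ℂ) :
    (V → ℂ) →ₗ[ℂ] (V → ℂ) where
  toFun f := fun v => if t.hasPar v then lam v * f (t.par v) else 0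
  map_add' f g := by
    funext v
    by_cases h : t.hasPar v <;> simp [h, mul_add]
  map_smul' c f := by
    funext v
    by_cases h : t.hasPar v <;> simp [h] <;> ring

/-- The domain `{f ∈ ℓ²(V) : Λ_T f ∈ ℓ²(V)}` of the weighted shift. -/
noncomputable def shiftDom {V : Type*} (t : DirectedTree V) (lam : V → ℂ) :
    Submodule ℂ (H2 V) where
  carrier := {f | Memℓp (lamLin t lam f) 2}
  zero_mem' := by
    simpa only [Set.mem_setOf_eq, lp.coeFn_zero, map_zero] using zero_memℓp
  add_mem' := by
    intro f g hf hg
    simp only [Set.mem_setOf_eq, lp.coeFn_add, map_add] at *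
    exact hf.add hg
  smul_mem' := by
    intro c f hf
    simp only [Set.mem_setOf_eq] at hf ⊢
    rw [lp.coeFn_smul, LinearMap.map_smul]
    exact hf.const_smul c

/-- The weighted shift `S_λ` on the directed tree `T`, as an unbounded operator in `ℓ²(V)`. -/
noncomputable def shift {V : Type*} (t : DirectedTree V) (lam : V → ℂ) :
    H2 V →ₗ.[ℂ] H2 V where
  domain := shiftDom t lam
  toFun :=
    { toFun := fun f => (⟨lamLin t lam f, f.2⟩ : H2 V)
      map_add' := by
        intro f g
        apply lp.ext
        simp only [Submodule.coe_add, lp.coeFn_add, map_add]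
      map_smul' := by
        intro c f
        apply lp.ext
        simp only [SetLike.val_smul, lp.coeFn_smul, LinearMap.map_smul, RingHom.id_apply] }

section Operator

variable {H : Type*} [NormedAddCommGroup H] [InnerProductSpace ℂ H]

/-- `x ∈ D(Tⁿ)`. -/
def iterMem (T : H →ₗ.[ℂ] H) : ℕ → H → Prop
  | 0, _ => True
  | n + 1, x => ∃ h : x ∈ T.domain, iterMem T n (T ⟨x, h⟩)

/-- `Tⁿ x` (junk value `0` if undefined along the way). -/
noncomputable def iterApp (T : H →ₗ.[ℂ] H) : ℕ → H → H
  | 0, x => x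
  | n + 1, x => if h : x ∈ T.domain then iterApp T n (T ⟨x, h⟩) else 0

/-- The inner product in the paper's convention: `⟨x, y⟩` is linear in `x`. -/
noncomputable def pinner (x y : H) : ℂ := inner (𝕜 := ℂ) y x

/-- `E ⊆ D∞(S_λ)` where `E = lin{e_u : u ∈ V}`. -/
def spanDomInfty {V : Type*} (t : DirectedTree V) (lam : V → ℂ) : Prop :=
  ∀ f ∈ espan V, ∀ n : ℕ, iterMem (shift t lam) n f

/-- A linear subspace `F` is a core of `T` if the graph of `T` is contained in the closure of
the graph of `T|_F`. -/
def IsCore (T : H →ₗ.[ℂ] H) (F : Submodule ℂ H) : Prop :=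
  (T.graph : Set (H × H)) ⊆ closure ((T.domRestrict F).graph : Set (H × H))

/-- `f` is a quasi-analytic vector of `T`:
`f ∈ D∞(T)` and `∑_{n ≥ 1} ‖Tⁿ f‖^{-1/n} = ∞` (convention `1/0 = ∞`). -/
def QuasiAnalyticVec (T : H →ₗ.[ℂ] H) (f : H) : Prop :=
  (∀ n : ℕ, iterMem T n f) ∧
    ∑' n : ℕ, (ENNReal.ofReal (‖iterApp T (n + 1) f‖ ^ (1 / (n + 1 : ℝ))))⁻¹ = ∞

end Operator

section NormalSubnormal

/-- A normal operator: closed, densely defined, with `D(N) = D(N*)` and `‖N* h‖ = ‖N h‖` on the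
common domain. -/
structure IsNormalOp {K : Type*} [NormedAddCommGroup K] [InnerProductSpace ℂ K]
    [CompleteSpace K] (N : K →ₗ.[ℂ] K) : Prop where
  dense : Dense (N.domain : Set K)
  isClosed : N.IsClosed
  dom_adjoint : N.adjoint.domain = N.domain
  norm_adjoint : ∀ (x : K) (hx : x ∈ N.domain) (hx' : x ∈ N.adjoint.domain),
    ‖N.adjoint ⟨x, hx'⟩‖ = ‖N ⟨x, hx⟩‖

/-- A normal extension of `S`: a Hilbert space `K`, an isometric linear embedding `J : H → K`,
and a normal operator `N` in `K` with `N (J h) = J (S h)` for all `h ∈ D(S)`. -/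
structure NormalExtension {H : Type u} [NormedAddCommGroup H] [InnerProductSpace ℂ H]
    (S : H →ₗ.[ℂ] H) : Type (u + 1) where
  K : Type u
  [instNG : NormedAddCommGroup K]
  [instIP : InnerProductSpace ℂ K]
  [instCS : CompleteSpace K]
  J : H →ₗᵢ[ℂ] K
  N : K →ₗ.[ℂ] K
  normal : IsNormalOp N
  ext_prop : ∀ x : S.domain, ∃ hx : J x ∈ N.domain, N ⟨J x, hx⟩ = J (S x)

/-- A densely defined operator is subnormal if it has a normal extension. -/
def Subnormal {H : Type u} [NormedAddCommGroup H] [InnerProductSpace ℂ H]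
    (S : H →ₗ.[ℂ] H) : Prop :=
  Dense (S.domain : Set H) ∧ Nonempty (NormalExtension S)

/-- A hyponormal operator: densely defined, `D(S) ⊆ D(S*)` and `‖S* f‖ ≤ ‖S f‖` on `D(S)`. -/
def Hyponormal {H : Type*} [NormedAddCommGroup H] [InnerProductSpace ℂ H] [CompleteSpace H]
    (S : H →ₗ.[ℂ] H) : Prop :=
  Dense (S.domain : Set H) ∧ S.domain ≤ S.adjoint.domain ∧
    ∀ (x : H) (hx : x ∈ S.domain) (hx' : x ∈ S.adjoint.domain),
      ‖S.adjoint ⟨x, hx'⟩‖ ≤ ‖S ⟨x, hx⟩‖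

end NormalSubnormal

section Stieltjes

open MeasureTheory

/-- `μ` is a representing measure of `{t_n}`: a positive Borel measure on `ℝ₊`
with `t_n = ∫_0^∞ sⁿ dμ(s)` for all `n`. -/
def IsRepMeasure (μ : Measure ℝ) (t : ℕ → ℝ) : Prop :=
  μ (Set.Iio 0) = 0 ∧ ∀ n : ℕ, Integrable (fun s => s ^ n) μ ∧ t n = ∫ s, s ^ n ∂μ

/-- `{t_n}` is a Stieltjes moment sequence. -/
def IsStieltjes (t : ℕ → ℝ) : Prop := ∃ μ : Measure ℝ, IsRepMeasure μ t

/-- A Stieltjes moment sequence is determinate if it has only one representing measure. -/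
def Determinate (t : ℕ → ℝ) : Prop :=
  ∀ ⦃μ ν : Measure ℝ⦄, IsRepMeasure μ t → IsRepMeasure ν t → μ = ν

/-- `∫_σ (1/s) dμ(s)`, with the convention `1/0 = ∞`. -/
noncomputable def recipInt (μ : Measure ℝ) (σ : Set ℝ) : ℝ≥0∞ :=
  ∫⁻ s in σ, (ENNReal.ofReal s)⁻¹ ∂μ

/-- The sequence `(θ, t_0, t_1, …)`. -/
def prepend (θ : ℝ) (t : ℕ → ℝ) : ℕ → ℝ
  | 0 => θ
  | n + 1 => t n

/-- `{t_n}` is positive definite. -/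
def PosDefSeq (t : ℕ → ℝ) : Prop :=
  ∀ (n : ℕ) (α : ℕ → ℂ),
    0 ≤ (∑ k ∈ Finset.range (n + 1), ∑ l ∈ Finset.range (n + 1),
      (t (k + l) : ℂ) * α k * (starRingEnd ℂ) (α l)).re

/-- The measure `ν_μ(σ) = ∫_σ (1/s) dμ(s) + (θ − ∫_0^∞ (1/s) dμ(s)) δ₀(σ)`. -/
noncomputable def numap (θ : ℝ) (μ : Measure ℝ) : Measure ℝ :=
  μ.withDensity (fun s => (ENNReal.ofReal s)⁻¹) +
    (ENNReal.ofReal θ - recipInt μ Set.univ) • Measure.dirac (0 : ℝ)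

/-- The measure `μ_ν(σ) = ∫_σ s dν(s)`. -/
noncomputable def mumap (ν : Measure ℝ) : Measure ℝ :=
  ν.withDensity fun s => ENNReal.ofReal s

end Stieltjes

section Consistency

open MeasureTheory

variable {V : Type*}

/-- The consistency condition \eqref{muu+} at the vertex `u`:
`μ_u(σ) = Σ_{v ∈ Chi(u)} |λ_v|² ∫_σ (1/s) dμ_v(s) + ε_u δ₀(σ)`. -/
def Consistent (t : DirectedTree V) (lam : V → ℂ) (μ : V → Measure ℝ) (ε : V → ℝ)
    (u : V) : Prop :=
  ∀ σ : Set ℝ, MeasurableSet σ →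
    μ u σ = (∑' v : t.chi u, ENNReal.ofReal (‖lam (v : V)‖ ^ 2) * recipInt (μ (v : V)) σ)
      + ENNReal.ofReal (ε u) * Measure.dirac (0 : ℝ) σ

/-- The measure `μ_u` from Lemma charsub2, built from the children measures:
`μ_u(σ) = Σ_{v ∈ Chi(u)} |λ_v|² ∫_σ (1/s) dμ_v(s) + ε_u δ₀(σ)` with
`ε_u = 1 − Σ_{v ∈ Chi(u)} |λ_v|² ∫_0^∞ (1/s) dμ_v(s)`. -/
noncomputable def consMeasure (t : DirectedTree V) (lam : V → ℂ) (μ : V → Measure ℝ)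
    (u : V) : Measure ℝ :=
  Measure.sum (fun v : t.chi u =>
      ENNReal.ofReal (‖lam (v : V)‖ ^ 2) •
        (μ (v : V)).withDensity fun s => (ENNReal.ofReal s)⁻¹) +
    (1 - ∑' v : t.chi u, ENNReal.ofReal (‖lam (v : V)‖ ^ 2) * recipInt (μ (v : V)) Set.univ) •
      Measure.dirac (0 : ℝ)

end Consistency

end Paper

open Paper MeasureTheory Filter
open scoped ENNReal



namespace Paper

variable {V : Type*}

lemma DirectedTree.par_eq (t : DirectedTree V) {w v : V} (h : t.E w v) : t.par v = w := by
  have hp : t.hasPar v := ⟨w, h⟩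
  rw [DirectedTree.par, dif_pos hp]
  exact t.par_unique hp.choose_spec h

lemma mem_chin_succ (t : DirectedTree V) {n : ℕ} {u v : V} :
    v ∈ t.chin (n + 1) u ↔ t.hasPar v ∧ t.par v ∈ t.chin n u := by
  constructor
  · rintro ⟨w, hw, hE⟩
    exact ⟨⟨w, hE⟩, by rwa [t.par_eq hE]⟩
  · rintro ⟨⟨w, hE⟩, hpar⟩
    rw [t.par_eq hE] at hpar
    exact ⟨w, hpar, hE⟩

lemma wprod_succ (t : DirectedTree V) (lam : V → ℂ) (n : ℕ) (v : V) :
    t.wprod lam (n + 1) v = lam v * t.wprod lam n (t.par v) := by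
  unfold DirectedTree.wprod
  rw [Finset.prod_range_succ']
  simp only [Function.iterate_succ_apply, Function.iterate_zero_apply]
  rw [mul_comm]

/-- The coefficient function of `S_λⁿ e_u`. -/
noncomputable def gfun (t : DirectedTree V) (lam : V → ℂ) (u : V) (n : ℕ) : V → ℂ :=
  fun v => if v ∈ t.chin n u then t.wprod lam n v else 0

lemma lamLin_gfun (t : DirectedTree V) (lam : V → ℂ) (u : V) (n : ℕ) :
    lamLin t lam (gfun t lam u n) = gfun t lam u (n + 1) := by
  funext v
  show (if t.hasPar v then lam v * gfun t lam u n (t.par v) else 0) = _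
  by_cases h : t.hasPar v
  · by_cases h2 : t.par v ∈ t.chin n u
    · have hv : v ∈ t.chin (n + 1) u := (mem_chin_succ t).2 ⟨h, h2⟩
      simp only [gfun, if_pos h, if_pos h2, if_pos hv, wprod_succ]
    · have hv : v ∉ t.chin (n + 1) u := fun hc => h2 ((mem_chin_succ t).1 hc).2
      simp only [gfun, if_pos h, if_neg h2, if_neg hv, mul_zero]
  · have hv : v ∉ t.chin (n + 1) u := fun hc => h ((mem_chin_succ t).1 hc).1
    simp only [gfun, if_neg h, if_neg hv]

lemma gfun_zero (t : DirectedTree V) (lam : V → ℂ) (u : V) :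
    gfun t lam u 0 = ⇑(evec u) := by
  funext v
  have h1 : v ∈ t.chin 0 u ↔ v = u := Set.mem_singleton_iff
  simp only [gfun, evec, lp.single_apply, DirectedTree.wprod, Finset.range_zero,
    Finset.prod_empty]
  by_cases h : v = u
  · subst h
    rw [if_pos (h1.2 rfl)]
    simp
  · rw [if_neg (fun hc => h (h1.1 hc)), Pi.single_eq_of_ne h]

lemma memℓp_two_iff (f : V → ℂ) : Memℓp f 2 ↔ Summable fun v => ‖f v‖ ^ 2 := by
  have h2 : ((2 : ℝ≥0∞).toReal) = (2 : ℝ) := by norm_num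
  have key : ∀ v, ‖f v‖ ^ ((2 : ℝ≥0∞).toReal) = ‖f v‖ ^ 2 := by
    intro v
    rw [h2]
    rw [show (2 : ℝ) = ((2 : ℕ) : ℝ) by norm_num, Real.rpow_natCast]
  constructor
  · intro h
    have := h.summable (p := 2) (by norm_num)
    simpa only [key] using this
  · intro h
    apply memℓp_gen
    simpa only [key] using h

lemma gfun_memℓp_iff (t : DirectedTree V) (lam : V → ℂ) (u : V) (n : ℕ) :
    Memℓp (gfun t lam u n) 2 ↔
      Summable fun v : t.chin n u => ‖t.wprod lam n (v : V)‖ ^ 2 := by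
  rw [memℓp_two_iff]
  have h1 : (Set.indicator (t.chin n u) fun v => ‖t.wprod lam n v‖ ^ 2)
      = fun v => ‖gfun t lam u n v‖ ^ 2 := by
    funext v
    by_cases h : v ∈ t.chin n u <;> simp [gfun, Set.indicator, h]
  rw [← h1, ← summable_subtype_iff_indicator]
  rfl

lemma shift_mem_dom_iff (t : DirectedTree V) (lam : V → ℂ) (f : H2 V) :
    f ∈ (shift t lam).domain ↔ Memℓp (lamLin t lam ⇑f) 2 := Iff.rfl

lemma shift_coe (t : DirectedTree V) (lam : V → ℂ) (f : H2 V)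
    (h : f ∈ (shift t lam).domain) :
    ⇑(shift t lam ⟨f, h⟩) = lamLin t lam ⇑f := rfl

lemma key_lemma (t : DirectedTree V) (lam : V → ℂ) (u : V) :
    ∀ (n k : ℕ) (f : H2 V), ⇑f = gfun t lam u k →
      (iterMem (shift t lam) n f ↔
        ∀ m : ℕ, k + 1 ≤ m → m ≤ k + n → Memℓp (gfun t lam u m) 2) ∧
      (iterMem (shift t lam) n f → ⇑(iterApp (shift t lam) n f) = gfun t lam u (k + n)) := by
  intro n
  induction n with
  | zero =>
    intro k f hf
    refine ⟨iff_of_true trivial (fun m h1 h2 => absurd (h1.trans h2) (by omega)), fun _ => ?_⟩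
    simpa [iterApp] using hf
  | succ n ih =>
    intro k f hf
    have hdom : f ∈ (shift t lam).domain ↔ Memℓp (gfun t lam u (k + 1)) 2 := by
      rw [shift_mem_dom_iff, hf, lamLin_gfun]
    have hcoe : ∀ h : f ∈ (shift t lam).domain,
        ⇑(shift t lam ⟨f, h⟩) = gfun t lam u (k + 1) := by
      intro h
      rw [shift_coe, hf, lamLin_gfun]
    have hmem : iterMem (shift t lam) (n + 1) f ↔
        ∃ h : f ∈ (shift t lam).domain, iterMem (shift t lam) n (shift t lam ⟨f, h⟩) :=
      Iff.rfl
    constructor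
    · rw [hmem]
      constructor
      · rintro ⟨h, hrest⟩ m h1 h2
        rcases eq_or_lt_of_le h1 with heq | hlt
        · rw [← heq]; exact hdom.1 h
        · exact ((ih (k + 1) _ (hcoe h)).1.1 hrest) m (by omega) (by omega)
      · intro H
        have h : f ∈ (shift t lam).domain := hdom.2 (H (k + 1) le_rfl (by omega))
        exact ⟨h, (ih (k + 1) _ (hcoe h)).1.2 (fun m h1 h2 => H m (by omega) (by omega))⟩
    · rw [hmem]
      rintro ⟨h, hrest⟩
      have : iterApp (shift t lam) (n + 1) f
          = iterApp (shift t lam) n (shift t lam ⟨f, h⟩) := by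
        simp [iterApp, dif_pos h]
      rw [this, (ih (k + 1) _ (hcoe h)).2 hrest, Nat.add_assoc, Nat.add_comm 1 n]

end Paper

set_option synthInstance.maxHeartbeats 1000000 in
set_option maxHeartbeats 1000000 in
/-- membership of `e_u` in `D(S_λⁿ)` and the formula for `S_λⁿ e_u`. -/
theorem stmt1 {V : Type*} (t : Paper.DirectedTree V) (lam : V → ℂ) (u : V) (n : ℕ) :
    (iterMem (shift t lam) n (evec u) ↔
      ∀ m : ℕ, 1 ≤ m → m ≤ n →
        Summable fun v : t.chin m u => ‖t.wprod lam m (v : V)‖ ^ 2) ∧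
    (iterMem (shift t lam) n (evec u) →
      iterApp (shift t lam) n (evec u)
        = ∑' v : t.chin n u, t.wprod lam n (v : V) • evec (v : V)) ∧
    (iterMem (shift t lam) n (evec u) →
      ‖iterApp (shift t lam) n (evec u)‖ ^ 2
        = ∑' v : t.chin n u, ‖t.wprod lam n (v : V)‖ ^ 2) := by
  
  classical
  obtain ⟨hiff, happ⟩ := key_lemma t lam u n 0 (evec u) (gfun_zero t lam u).symm
  have hiff' : iterMem (shift t lam) n (evec u) ↔
      ∀ m : ℕ, 1 ≤ m → m ≤ n →
        Summable fun v : t.chin m u => ‖t.wprod lam m (v : V)‖ ^ 2 := by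
    rw [hiff]
    constructor
    · intro H m h1 h2
      exact (gfun_memℓp_iff t lam u m).1 (H m (by omega) (by omega))
    · intro H m h1 h2
      exact (gfun_memℓp_iff t lam u m).2 (H m (by omega) (by omega))
  have happ' : iterMem (shift t lam) n (evec u) →
      ⇑(iterApp (shift t lam) n (evec u)) = gfun t lam u n := by
    intro h
    simpa using happ h
  refine ⟨hiff', ?_, ?_⟩
  · intro h
    set F := iterApp (shift t lam) n (evec u) with hF
    have hc : ⇑F = gfun t lam u n := happ' h
    have hs : HasSum (fun v : V => gfun t lam u n v • evec v) F := by
      have := lp.hasSum_single ENNReal.ofNat_ne_top F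
      convert this using 2 with v
      rw [hc]
      rw [evec, ← lp.single_smul, smul_eq_mul, mul_one]
    symm
    calc ∑' v : t.chin n u, t.wprod lam n (v : V) • evec (v : V)
        = ∑' v : t.chin n u, gfun t lam u n (v : V) • evec (v : V) := by
          refine tsum_congr fun v => ?_
          rw [gfun, if_pos v.2]
      _ = ∑' v : V, gfun t lam u n v • evec v := by
          refine tsum_subtype_eq_of_support_subset
            (f := fun v => gfun t lam u n v • evec v) (s := t.chin n u) ?_
          intro v hv
          by_contra hmem
          simp only [Function.mem_support, gfun, if_neg hmem, zero_smul,
            ne_eq, not_true_eq_false] at hv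
      _ = F := hs.tsum_eq
  · intro h
    have hc : ⇑(iterApp (shift t lam) n (evec u)) = gfun t lam u n := happ' h
    have hnorm := lp.norm_rpow_eq_tsum (p := 2)
      (by norm_num) (iterApp (shift t lam) n (evec u))
    have h2 : ((2 : ℝ≥0∞).toReal) = (2 : ℝ) := by norm_num
    have key : ∀ x : ℝ, x ^ ((2 : ℝ≥0∞).toReal) = x ^ 2 := by
      intro x
      rw [h2, show (2 : ℝ) = ((2 : ℕ) : ℝ) by norm_num, Real.rpow_natCast]
    rw [key, hc] at hnorm
    simp only [key] at hnorm
    rw [hnorm]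
    calc (∑' v : V, ‖gfun t lam u n v‖ ^ 2)
        = ∑' v : t.chin n u, ‖gfun t lam u n (v : V)‖ ^ 2 := by
          refine (tsum_subtype_eq_of_support_subset
            (f := fun v => ‖gfun t lam u n v‖ ^ 2) (s := t.chin n u) ?_).symm
          intro v hv
          by_contra hmem
          simp only [Function.mem_support, gfun, if_neg hmem, norm_zero,
            ne_eq] at hv
          exact hv (by norm_num)
      _ = ∑' v : t.chin n u, ‖t.wprod lam n (v : V)‖ ^ 2 := by
          refine tsum_congr fun v => ?_
          rw [gfun, if_pos v.2]
end
end

section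
/- Let T be a directed tree, let λ^(i) = {λ^(i)_v}_{v∈V°} (i = 1, 2, 3, …) and λ = {λ_v}_{v∈V°} be families of complex numbers, and let S_{λ^(i)} and S_λ be the corresponding weighted shifts on T. Suppose that (i) E ⊆ D∞(S_λ) ∩ ⋂_{i=1}^∞ D∞(S_{λ^(i)}), (ii) lim_{i→∞} λ^(i)_v = λ_v for every v ∈ V°, and (iii) lim_{i→∞} ‖S_{λ^(i)}ⁿ e_u‖ = ‖S_λⁿ e_u‖ for all n ∈ ℕ and u ∈ V. Then ⟨S_λ^m e_u, S_λ^n e_v⟩ = lim_{i→∞} ⟨S_{λ^(i)}^m e_u, S_{λ^(i)}^n e_v⟩ for all u, v ∈ V and m, n ∈ ℕ. -/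
open Filter
open scoped ENNReal InnerProductSpace ComplexConjugate

attribute [local instance] Classical.propDecidable

noncomputable section

open Paper MeasureTheory Filter
open scoped ENNReal



noncomputable section
namespace StmtAux

variable {V : Type*}

lemma shift_apply_coe (t : DirectedTree V) (lam : V → ℂ) (f : (shift t lam).domain) :
    ((shift t lam f : H2 V) : V → ℂ) = lamLin t lam (f : H2 V) := rfl

lemma iterApp_coe (t : DirectedTree V) (lam : V → ℂ) :
    ∀ (n : ℕ) (f : H2 V), iterMem (shift t lam) n f →
      ((iterApp (shift t lam) n f : H2 V) : V → ℂ) = (lamLin t lam)^[n] (f : V → ℂ)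
  | 0, f, _ => rfl
  | n + 1, f, h => by
    obtain ⟨hd, h'⟩ := h
    rw [iterApp, dif_pos hd, iterApp_coe t lam n _ h', shift_apply_coe,
      ← Function.iterate_succ_apply]

lemma lamLin_apply (t : DirectedTree V) (lam : V → ℂ) (f : V → ℂ) (w : V) :
    lamLin t lam f w = if t.hasPar w then lam w * f (t.par w) else 0 := rfl

lemma iter_tendsto (t : DirectedTree V) (lam : V → ℂ) (lamI : ℕ → V → ℂ)
    (h2 : ∀ v, t.hasPar v → Tendsto (fun i => lamI i v) atTop (nhds (lam v)))
    (f : V → ℂ) :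
    ∀ (n : ℕ) (w : V),
      Tendsto (fun i => (lamLin t (lamI i))^[n] f w) atTop
        (nhds ((lamLin t lam)^[n] f w))
  | 0, w => tendsto_const_nhds
  | n + 1, w => by
    simp only [Function.iterate_succ_apply', lamLin_apply]
    by_cases hw : t.hasPar w
    · simp only [if_pos hw]
      exact (h2 w hw).mul (iter_tendsto t lam lamI h2 f n (t.par w))
    · simp only [if_neg hw]; exact tendsto_const_nhds

end StmtAux
end


noncomputable section
namespace StmtAux2

variable {ι : Type*}

lemma inner_tendsto (x : lp (fun _ : ι => ℂ) 2) (xs : ℕ → lp (fun _ : ι => ℂ) 2)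
    (hpt : ∀ w : ι, Tendsto (fun i => (xs i : ∀ _ : ι, ℂ) w) atTop
      (nhds ((x : ∀ _ : ι, ℂ) w)))
    (M : ℝ) (hb : ∀ᶠ i in atTop, ‖xs i‖ ≤ M) :
    Tendsto (fun i => (inner ℂ x (xs i) : ℂ)) atTop (nhds (inner ℂ x x)) := by
  classical
  rw [Metric.tendsto_nhds]
  intro ε hε
  have hM : (0:ℝ) ≤ M := by
    obtain ⟨i, hi⟩ := hb.exists
    exact (norm_nonneg _).trans hi
  set δ : ℝ := ε / (2 * (M + ‖x‖ + 1)) with hδdef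
  have hden : (0:ℝ) < 2 * (M + ‖x‖ + 1) := by positivity
  have hδ : 0 < δ := div_pos hε hden
  -- choose a finite truncation of x within δ
  have hsum : HasSum (fun w : ι => lp.single 2 w ((x : ∀ _ : ι, ℂ) w)) x :=
    lp.hasSum_single ENNReal.ofNat_ne_top x
  have : ∀ᶠ F : Finset ι in atTop,
      (∑ w ∈ F, lp.single 2 w ((x : ∀ _ : ι, ℂ) w)) ∈ Metric.ball x δ :=
    hsum.eventually (Metric.ball_mem_nhds x hδ)
  obtain ⟨F, hF⟩ := this.exists
  set s : lp (fun _ : ι => ℂ) 2 := ∑ w ∈ F, lp.single 2 w ((x : ∀ _ : ι, ℂ) w) with hs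
  have hxs : ‖x - s‖ < δ := by
    rw [← dist_eq_norm, dist_comm]
    exact hF
  have hinner_s : ∀ y : lp (fun _ : ι => ℂ) 2,
      (inner ℂ s y : ℂ) = ∑ w ∈ F, conj ((x : ∀ _ : ι, ℂ) w) * (y : ∀ _ : ι, ℂ) w := by
    intro y
    rw [hs, sum_inner]
    refine Finset.sum_congr rfl fun w _ => ?_
    rw [lp.inner_single_left]
    exact RCLike.inner_apply' _ _
  have hfin : Tendsto (fun i => (inner ℂ s (xs i) : ℂ)) atTop (nhds (inner ℂ s x)) := by
    simp only [hinner_s]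
    exact tendsto_finset_sum _ fun w _ => tendsto_const_nhds.mul (hpt w)
  have hfin' : ∀ᶠ i in atTop, ‖(inner ℂ s (xs i) : ℂ) - inner ℂ s x‖ < ε / 2 := by
    have := hfin.eventually (Metric.ball_mem_nhds (inner ℂ s x) (by linarith : (0:ℝ) < ε / 2))
    filter_upwards [this] with i hi
    rw [← dist_eq_norm]; exact hi
  filter_upwards [hb, hfin'] with i hbi hfi
  -- decompose
  have hdec : (inner ℂ x (xs i) : ℂ) - inner ℂ x x
      = inner ℂ (x - s) (xs i - x) + ((inner ℂ s (xs i) : ℂ) - inner ℂ s x) := by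
    simp only [inner_sub_left, inner_sub_right]
    ring
  rw [dist_eq_norm, hdec]
  have h1 : ‖(inner ℂ (x - s) (xs i - x) : ℂ)‖ ≤ δ * (M + ‖x‖) := by
    calc ‖(inner ℂ (x - s) (xs i - x) : ℂ)‖ ≤ ‖x - s‖ * ‖xs i - x‖ := norm_inner_le_norm _ _
      _ ≤ δ * (M + ‖x‖) := by
          apply mul_le_mul hxs.le ((norm_sub_le _ _).trans (by linarith [norm_nonneg x]))
            (norm_nonneg _) hδ.le
  have h2 : δ * (M + ‖x‖) < ε / 2 := by
    rw [hδdef, div_mul_eq_mul_div, div_lt_div_iff₀ hden (by norm_num : (0:ℝ) < 2)]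
    nlinarith [norm_nonneg x]
  calc ‖inner ℂ (x - s) (xs i - x) + ((inner ℂ s (xs i) : ℂ) - inner ℂ s x)‖
      ≤ ‖(inner ℂ (x - s) (xs i - x) : ℂ)‖ + ‖(inner ℂ s (xs i) : ℂ) - inner ℂ s x‖ :=
        norm_add_le _ _
    _ < ε := by linarith

lemma tendsto_of_pointwise_norm (x : lp (fun _ : ι => ℂ) 2) (xs : ℕ → lp (fun _ : ι => ℂ) 2)
    (hpt : ∀ w : ι, Tendsto (fun i => (xs i : ∀ _ : ι, ℂ) w) atTop
      (nhds ((x : ∀ _ : ι, ℂ) w)))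
    (hn : Tendsto (fun i => ‖xs i‖) atTop (nhds ‖x‖)) :
    Tendsto xs atTop (nhds x) := by
  have hb : ∀ᶠ i in atTop, ‖xs i‖ ≤ ‖x‖ + 1 :=
    (hn.eventually_lt_const (by linarith [norm_nonneg x] : ‖x‖ < ‖x‖ + 1)).mono
      fun i hi => hi.le
  have hin := inner_tendsto x xs hpt (‖x‖ + 1) hb
  have hre : Tendsto (fun i => RCLike.re (inner (𝕜 := ℂ) x (xs i))) atTop
      (nhds (RCLike.re (inner (𝕜 := ℂ) x x))) :=
    (RCLike.continuous_re.tendsto _).comp hin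
  have hsq : Tendsto (fun i => ‖xs i - x‖ ^ 2) atTop (nhds 0) := by
    have key : ∀ i, ‖xs i - x‖ ^ 2
        = ‖xs i‖ ^ 2 - 2 * RCLike.re (inner (𝕜 := ℂ) x (xs i)) + ‖x‖ ^ 2 := by
      intro i
      rw [norm_sub_sq (𝕜 := ℂ), inner_re_symm]
    simp only [key]
    have : Tendsto (fun i => ‖xs i‖ ^ 2 - 2 * RCLike.re (inner (𝕜 := ℂ) x (xs i)) + ‖x‖ ^ 2)
        atTop (nhds (‖x‖ ^ 2 - 2 * RCLike.re (inner (𝕜 := ℂ) x x) + ‖x‖ ^ 2)) :=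
      (((hn.pow 2).sub (hre.const_mul 2)).add tendsto_const_nhds)
    convert this using 2
    rw [inner_self_eq_norm_sq]
    ring
  rw [tendsto_iff_norm_sub_tendsto_zero]
  have : Tendsto (fun i => Real.sqrt (‖xs i - x‖ ^ 2)) atTop (nhds (Real.sqrt 0)) :=
    (Real.continuous_sqrt.tendsto _).comp hsq
  simpa [Real.sqrt_sq (norm_nonneg _)] using this

end StmtAux2
end

/-- convergence of inner products of powers for approximating weighted shifts. -/
theorem stmt3 {V : Type*} (t : Paper.DirectedTree V) (lam : V → ℂ) (lamI : ℕ → V → ℂ)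
    (h1 : spanDomInfty t lam) (h1' : ∀ i : ℕ, spanDomInfty t (lamI i))
    (h2 : ∀ v : V, t.hasPar v → Tendsto (fun i => lamI i v) atTop (nhds (lam v)))
    (h3 : ∀ (n : ℕ) (u : V),
      Tendsto (fun i => ‖iterApp (shift t (lamI i)) n (evec u)‖) atTop
        (nhds ‖iterApp (shift t lam) n (evec u)‖)) :
    ∀ (u v : V) (m n : ℕ),
      Tendsto (fun i =>
          pinner (iterApp (shift t (lamI i)) m (evec u))
            (iterApp (shift t (lamI i)) n (evec v))) atTop
        (nhds (pinner (iterApp (shift t lam) m (evec u))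
          (iterApp (shift t lam) n (evec v)))) := by
  intro u v m n
  have mem : ∀ (lam' : V → ℂ), spanDomInfty t lam' → ∀ (k : ℕ) (w : V),
      iterMem (shift t lam') k (evec w) := fun lam' h k w =>
    h _ (Submodule.subset_span ⟨w, rfl⟩) k
  have conv : ∀ (k : ℕ) (w : V),
      Tendsto (fun i => iterApp (shift t (lamI i)) k (evec w)) atTop
        (nhds (iterApp (shift t lam) k (evec w))) := by
    intro k w
    apply StmtAux2.tendsto_of_pointwise_norm
    · intro z
      have e1 : ∀ i : ℕ, ((iterApp (shift t (lamI i)) k (evec w) : H2 V) : V → ℂ)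
          = (lamLin t (lamI i))^[k] ((evec w : H2 V) : V → ℂ) := fun i =>
        StmtAux.iterApp_coe t (lamI i) k _ (mem _ (h1' i) k w)
      have e2 : ((iterApp (shift t lam) k (evec w) : H2 V) : V → ℂ)
          = (lamLin t lam)^[k] ((evec w : H2 V) : V → ℂ) :=
        StmtAux.iterApp_coe t lam k _ (mem _ h1 k w)
      simp only [e1, e2]
      exact StmtAux.iter_tendsto t lam lamI h2 _ k z
    · exact h3 k w
  simp only [pinner]
  exact (conv n v).inner (conv m u)
end
end

section
/- Let {t_n}_{n≥0} be a Stieltjes moment sequence, let θ > 0, set t_{-1} = θ, and suppose {t_{n-1}}_{n≥0} is a Stieltjes moment sequence. Let M₀(θ) be the set of representing measures μ of {t_n}_{n≥0} with ∫_0^∞ (1/s) dμ(s) ≤ θ, and let M₋₁(θ) be the set of all representing measures of {t_{n-1}}_{n≥0}. Then the map M₀(θ) ∋ μ ↦ ν_μ ∈ M₋₁(θ), where ν_μ(σ) = ∫_σ (1/s) dμ(s) + (θ − ∫_0^∞ (1/s) dμ(s)) δ₀(σ) for Borel σ ⊆ ℝ₊, is a well-defined bijection whose inverse M₋₁(θ)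 ∋ ν ↦ μ_ν ∈ M₀(θ) is given by μ_ν(σ) = ∫_σ s dν(s). In particular, ν_μ({0}) = 0 if and only if ∫_0^∞ (1/s) dμ(s) = θ. -/
open Filter
open scoped ENNReal InnerProductSpace ComplexConjugate

attribute [local instance] Classical.propDecidable

noncomputable section

open Paper MeasureTheory Filter
open scoped ENNReal



section Stmt5Aux

private lemma ae_nonneg' {ρ : Measure ℝ} (h : ρ (Set.Iio 0) = 0) : ∀ᵐ s ∂ρ, 0 ≤ s := by
  rw [ae_iff]
  convert h using 2
  ext s; simp [not_le]

private lemma key_int {ρ : Measure ℝ} (h : ρ (Set.Iio 0) = 0) (n : ℕ) :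
    Integrable (fun s => s ^ n) ρ ↔ ∫⁻ s, ENNReal.ofReal (s ^ n) ∂ρ ≠ ∞ := by
  have hae : 0 ≤ᵐ[ρ] fun s => s ^ n := (ae_nonneg' h).mono fun s hs => pow_nonneg hs n
  constructor
  · intro hI; exact ((hasFiniteIntegral_iff_ofReal hae).1 hI.2).ne
  · intro hfin
    exact ⟨(measurable_id.pow_const n).aestronglyMeasurable,
      (hasFiniteIntegral_iff_ofReal hae).2 hfin.lt_top⟩

private lemma key_eq {ρ : Measure ℝ} (h : ρ (Set.Iio 0) = 0) (n : ℕ) :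
    ∫ s, s ^ n ∂ρ = (∫⁻ s, ENNReal.ofReal (s ^ n) ∂ρ).toReal := by
  rw [integral_eq_lintegral_of_nonneg_ae ((ae_nonneg' h).mono fun s hs => pow_nonneg hs n)
    (measurable_id.pow_const n).aestronglyMeasurable]

private lemma rep_lint {ρ : Measure ℝ} {t : ℕ → ℝ} (hrep : IsRepMeasure ρ t) (n : ℕ) :
    ∫⁻ s, ENNReal.ofReal (s ^ n) ∂ρ = ENNReal.ofReal (t n) := by
  have hfin := (key_int hrep.1 n).1 (hrep.2 n).1
  rw [(hrep.2 n).2, key_eq hrep.1 n, ENNReal.ofReal_toReal hfin]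

private lemma rep_nonneg {ρ : Measure ℝ} {t : ℕ → ℝ} (hrep : IsRepMeasure ρ t) (n : ℕ) :
    0 ≤ t n := by
  rw [(hrep.2 n).2, key_eq hrep.1 n]; exact ENNReal.toReal_nonneg

private lemma rep_of {ρ : Measure ℝ} {t : ℕ → ℝ} (h0 : ρ (Set.Iio 0) = 0)
    (hL : ∀ n, ∫⁻ s, ENNReal.ofReal (s ^ n) ∂ρ = ENNReal.ofReal (t n))
    (ht : ∀ n, 0 ≤ t n) : IsRepMeasure ρ t := by
  refine ⟨h0, fun n => ?_⟩
  have hfin : ∫⁻ s, ENNReal.ofReal (s ^ n) ∂ρ ≠ ∞ := by rw [hL n]; exact ENNReal.ofReal_ne_top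
  refine ⟨(key_int h0 n).2 hfin, ?_⟩
  rw [key_eq h0 n, hL n, ENNReal.toReal_ofReal (ht n)]

private lemma mu_zero {θ : ℝ} {μ : Measure ℝ}
    (hle : recipInt μ Set.univ ≤ ENNReal.ofReal θ) : μ {0} = 0 := by
  by_contra h
  have h1 : ∫⁻ s in {(0:ℝ)}, (ENNReal.ofReal s)⁻¹ ∂μ = ∞ := by
    rw [lintegral_singleton]
    simp [ENNReal.top_mul h]
  have hle' : ∫⁻ s, (ENNReal.ofReal s)⁻¹ ∂μ ≤ ENNReal.ofReal θ := by
    rw [recipInt, Measure.restrict_univ] at hle; exact hle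
  have h2 := (setLIntegral_le_lintegral {(0:ℝ)} (fun s => (ENNReal.ofReal s)⁻¹)).trans hle'
  rw [h1] at h2
  exact ENNReal.ofReal_ne_top (top_le_iff.1 h2)

private lemma mu_iic {θ : ℝ} {μ : Measure ℝ} (h0 : μ (Set.Iio 0) = 0)
    (hle : recipInt μ Set.univ ≤ ENNReal.ofReal θ) : μ (Set.Iic 0) = 0 := by
  rw [← Set.Iio_union_right]
  exact measure_union_null h0 (mu_zero hle)

private lemma w_meas : Measurable fun s : ℝ => (ENNReal.ofReal s)⁻¹ :=
  ENNReal.measurable_ofReal.inv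

private lemma wd_indicator :
    (fun s : ℝ => (ENNReal.ofReal s)⁻¹ * ENNReal.ofReal s) = (Set.Ioi (0:ℝ)).indicator 1 := by
  funext s
  by_cases hs : 0 < s
  · rw [Set.indicator_of_mem (Set.mem_Ioi.2 hs)]
    exact ENNReal.inv_mul_cancel (ENNReal.ofReal_pos.2 hs).ne'
      ENNReal.ofReal_ne_top
  · have hz : ENNReal.ofReal s = 0 := by simpa [ENNReal.ofReal_eq_zero] using not_lt.1 hs
    rw [Set.indicator_of_notMem (by simpa [Set.mem_Ioi] using hs), hz, mul_zero]

private lemma lint_numap {θ : ℝ} {μ : Measure ℝ} {f : ℝ → ℝ≥0∞} (hf : Measurable f) :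
    ∫⁻ s, f s ∂(numap θ μ) =
      (∫⁻ s, (ENNReal.ofReal s)⁻¹ * f s ∂μ)
        + (ENNReal.ofReal θ - recipInt μ Set.univ) * f 0 := by
  rw [numap, lintegral_add_measure, lintegral_smul_measure, lintegral_dirac' _ hf,
    lintegral_withDensity_eq_lintegral_mul μ w_meas hf]
  rfl

private lemma lint_mumap {ν : Measure ℝ} {f : ℝ → ℝ≥0∞} (hf : Measurable f) :
    ∫⁻ s, f s ∂(mumap ν) = ∫⁻ s, ENNReal.ofReal s * f s ∂ν := by
  rw [mumap, lintegral_withDensity_eq_lintegral_mul ν ENNReal.measurable_ofReal hf]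
  rfl

private lemma numap_rep {t : ℕ → ℝ} {θ : ℝ} (hθ : 0 < θ) {μ : Measure ℝ}
    (hμ : IsRepMeasure μ t) (hle : recipInt μ Set.univ ≤ ENNReal.ofReal θ) :
    IsRepMeasure (numap θ μ) (prepend θ t) := by
  have hpos : ∀ᵐ s ∂μ, 0 < s := by
    rw [ae_iff]
    convert mu_iic hμ.1 hle using 2
    ext s; simp [not_lt]
  refine rep_of ?_ ?_ ?_
  · rw [numap, Measure.add_apply, Measure.smul_apply,
      withDensity_apply _ measurableSet_Iio, setLIntegral_measure_zero _ _ hμ.1,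
      Measure.dirac_apply' _ measurableSet_Iio]
    simp
  · intro n
    rw [lint_numap (by fun_prop : Measurable fun s : ℝ => ENNReal.ofReal (s ^ n))]
    cases n with
    | zero =>
      simp only [pow_zero, ENNReal.ofReal_one, mul_one]
      have : ∫⁻ s, (ENNReal.ofReal s)⁻¹ ∂μ = recipInt μ Set.univ := by
        rw [recipInt, Measure.restrict_univ]
      rw [this, add_tsub_cancel_of_le hle]; rfl
    | succ n =>
      have h1 : ∫⁻ s, (ENNReal.ofReal s)⁻¹ * ENNReal.ofReal (s ^ (n + 1)) ∂μ
          = ∫⁻ s, ENNReal.ofReal (s ^ n) ∂μ := by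
        refine lintegral_congr_ae (hpos.mono fun s hs => ?_)
        have hnn : (0:ℝ) ≤ s ^ n := pow_nonneg hs.le n
        show (ENNReal.ofReal s)⁻¹ * ENNReal.ofReal (s ^ (n + 1)) = ENNReal.ofReal (s ^ n)
        rw [pow_succ, ENNReal.ofReal_mul hnn, ← mul_assoc,
          mul_comm ((ENNReal.ofReal s)⁻¹) (ENNReal.ofReal (s ^ n)), mul_assoc,
          ENNReal.inv_mul_cancel (ENNReal.ofReal_pos.2 hs).ne'
            ENNReal.ofReal_ne_top, mul_one]
      rw [h1, rep_lint hμ n]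
      simp [prepend]
  · intro n
    cases n with
    | zero => exact hθ.le
    | succ n => exact rep_nonneg hμ n

private lemma mumap_numap {t : ℕ → ℝ} {θ : ℝ} {μ : Measure ℝ}
    (hμ : IsRepMeasure μ t) (hle : recipInt μ Set.univ ≤ ENNReal.ofReal θ) :
    mumap (numap θ μ) = μ := by
  have hd : (Measure.dirac (0:ℝ)).withDensity (fun s => ENNReal.ofReal s) = 0 := by
    apply Measure.measure_univ_eq_zero.1
    rw [withDensity_apply _ MeasurableSet.univ, Measure.restrict_univ,
      lintegral_dirac' _ ENNReal.measurable_ofReal]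
    simp
  rw [mumap, numap, withDensity_add_measure, withDensity_smul_measure, hd, smul_zero, add_zero,
    ← withDensity_mul₀ w_meas.aemeasurable ENNReal.measurable_ofReal.aemeasurable]
  have : (fun s : ℝ => (ENNReal.ofReal s)⁻¹ * ENNReal.ofReal s) = (Set.Ioi (0:ℝ)).indicator 1 :=
    wd_indicator
  rw [show ((fun s : ℝ => (ENNReal.ofReal s)⁻¹) * fun s => ENNReal.ofReal s)
      = (Set.Ioi (0:ℝ)).indicator 1 from wd_indicator,
    withDensity_indicator measurableSet_Ioi, withDensity_one]
  refine Measure.restrict_eq_self_of_ae_mem ?_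
  rw [ae_iff]
  convert mu_iic hμ.1 hle using 2
  ext s; simp [not_lt]

private lemma nu_univ {t : ℕ → ℝ} {θ : ℝ} {ν : Measure ℝ}
    (hν : IsRepMeasure ν (prepend θ t)) : ν Set.univ = ENNReal.ofReal θ := by
  have := rep_lint hν 0
  simpa [prepend] using this

private lemma recip_mumap {ν : Measure ℝ} :
    recipInt (mumap ν) Set.univ = ν (Set.Ioi 0) := by
  have : recipInt (mumap ν) Set.univ = ∫⁻ s, (ENNReal.ofReal s)⁻¹ ∂(mumap ν) := by
    rw [recipInt, Measure.restrict_univ]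
  rw [this, lint_mumap w_meas]
  have h1 : (fun s : ℝ => ENNReal.ofReal s * (ENNReal.ofReal s)⁻¹)
      = (Set.Ioi (0:ℝ)).indicator 1 := by
    rw [← wd_indicator]; funext s; exact mul_comm _ _
  rw [h1, lintegral_indicator measurableSet_Ioi]
  simp

private lemma mumap_mem {t : ℕ → ℝ} {θ : ℝ} {ν : Measure ℝ}
    (hν : IsRepMeasure ν (prepend θ t)) :
    IsRepMeasure (mumap ν) t ∧ recipInt (mumap ν) Set.univ ≤ ENNReal.ofReal θ := by
  have h0 : mumap ν (Set.Iio 0) = 0 := by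
    rw [mumap, withDensity_apply _ measurableSet_Iio, setLIntegral_measure_zero _ _ hν.1]
  constructor
  · refine rep_of h0 ?_ fun n => rep_nonneg hν (n + 1)
    intro n
    rw [lint_mumap (by fun_prop : Measurable fun s : ℝ => ENNReal.ofReal (s ^ n))]
    have h1 : ∫⁻ s, ENNReal.ofReal s * ENNReal.ofReal (s ^ n) ∂ν
        = ∫⁻ s, ENNReal.ofReal (s ^ (n + 1)) ∂ν := by
      refine lintegral_congr_ae ((ae_nonneg' hν.1).mono fun s hs => ?_)
      show ENNReal.ofReal s * ENNReal.ofReal (s ^ n) = ENNReal.ofReal (s ^ (n + 1))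
      rw [pow_succ, mul_comm (s ^ n) s, ENNReal.ofReal_mul hs]
    rw [h1, rep_lint hν (n + 1)]
    rfl
  · rw [recip_mumap, ← nu_univ hν]
    exact measure_mono (Set.subset_univ _)

private lemma numap_mumap {t : ℕ → ℝ} {θ : ℝ} {ν : Measure ℝ}
    (hν : IsRepMeasure ν (prepend θ t)) : numap θ (mumap ν) = ν := by
  have hfin : ν (Set.Ioi 0) ≠ ∞ := by
    refine ne_top_of_le_ne_top ?_ (measure_mono (Set.subset_univ _))
    rw [nu_univ hν]; exact ENNReal.ofReal_ne_top
  have hconst : ENNReal.ofReal θ - recipInt (mumap ν) Set.univ = ν {0} := by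
    rw [recip_mumap, ← nu_univ hν, ← measure_compl measurableSet_Ioi hfin, Set.compl_Ioi,
      ← Set.Iio_union_right, measure_union (Set.disjoint_singleton_right.2 (by simp))
        (measurableSet_singleton 0), hν.1, zero_add]
  rw [numap, hconst, mumap,
    ← withDensity_mul₀ ENNReal.measurable_ofReal.aemeasurable w_meas.aemeasurable]
  have h1 : ((fun s : ℝ => ENNReal.ofReal s) * fun s => (ENNReal.ofReal s)⁻¹)
      = (Set.Ioi (0:ℝ)).indicator 1 := by
    rw [← wd_indicator]; funext s; exact mul_comm _ _
  rw [h1, withDensity_indicator measurableSet_Ioi, withDensity_one]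
  have h2 : ν.restrict (Set.Ioi 0)ᶜ = (ν {0}) • Measure.dirac 0 := by
    have hdiff1 : Set.Iic (0:ℝ) \ {0} = Set.Iio 0 := by
      ext s
      simp only [Set.mem_diff, Set.mem_Iic, Set.mem_singleton_iff, Set.mem_Iio]
      constructor
      · rintro ⟨h1, h2⟩; exact lt_of_le_of_ne h1 h2
      · intro h; exact ⟨h.le, h.ne⟩
    have hae : Set.Iic (0:ℝ) =ᵐ[ν] ({0} : Set ℝ) := by
      rw [MeasureTheory.ae_eq_set]
      constructor
      · rw [hdiff1]; exact hν.1
      · refine measure_mono_null (fun s hs => ?_) hν.1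
        simp only [Set.mem_diff, Set.mem_singleton_iff, Set.mem_Iic] at hs
        exact absurd (le_of_eq hs.1) hs.2
    rw [Set.compl_Ioi, Measure.restrict_congr_set hae, Measure.restrict_singleton]
  conv_rhs => rw [← Measure.restrict_add_restrict_compl (μ := ν) (measurableSet_Ioi (a := (0:ℝ)))]
  rw [h2]

end Stmt5Aux

/-- the bijection `μ ↦ ν_μ` between `M₀(θ)` and `M₋₁(θ)` with inverse `ν ↦ μ_ν`. -/
theorem stmt5 (t : ℕ → ℝ) (θ : ℝ) (hθ : 0 < θ) (hS : IsStieltjes t)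
    (hS' : IsStieltjes (prepend θ t)) :
    Set.BijOn (numap θ)
        {μ : Measure ℝ | IsRepMeasure μ t ∧ recipInt μ Set.univ ≤ ENNReal.ofReal θ}
        {ν : Measure ℝ | IsRepMeasure ν (prepend θ t)} ∧
    (∀ μ : Measure ℝ, IsRepMeasure μ t → recipInt μ Set.univ ≤ ENNReal.ofReal θ →
      mumap (numap θ μ) = μ) ∧
    (∀ ν : Measure ℝ, IsRepMeasure ν (prepend θ t) →
      (IsRepMeasure (mumap ν) t ∧ recipInt (mumap ν) Set.univ ≤ ENNReal.ofReal θ) ∧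
        numap θ (mumap ν) = ν) ∧
    (∀ μ : Measure ℝ, IsRepMeasure μ t → recipInt μ Set.univ ≤ ENNReal.ofReal θ →
      (numap θ μ {0} = 0 ↔ recipInt μ Set.univ = ENNReal.ofReal θ)) := by
  have part2 : ∀ μ : Measure ℝ, IsRepMeasure μ t → recipInt μ Set.univ ≤ ENNReal.ofReal θ →
      mumap (numap θ μ) = μ := fun μ hμ hle => mumap_numap hμ hle
  have part3 : ∀ ν : Measure ℝ, IsRepMeasure ν (prepend θ t) →
      (IsRepMeasure (mumap ν) t ∧ recipInt (mumap ν) Set.univ ≤ ENNReal.ofReal θ) ∧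
        numap θ (mumap ν) = ν := fun ν hν => ⟨mumap_mem hν, numap_mumap hν⟩
  refine ⟨Set.InvOn.bijOn ⟨fun μ hμ => part2 μ hμ.1 hμ.2, fun ν hν => (part3 ν hν).2⟩
      (fun μ hμ => numap_rep hθ hμ.1 hμ.2) (fun ν hν => (part3 ν hν).1), part2, part3, ?_⟩
  intro μ hμ hle
  have hz : numap θ μ {0} = ENNReal.ofReal θ - recipInt μ Set.univ := by
    rw [numap, Measure.add_apply, Measure.smul_apply,
      withDensity_apply _ (measurableSet_singleton 0), lintegral_singleton, mu_zero hle,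
      mul_zero, zero_add, Measure.dirac_apply_of_mem (by simp), smul_eq_mul, mul_one]
  rw [hz, tsub_eq_zero_iff_le]
  exact ⟨fun h => le_antisymm hle h, fun h => h.ge⟩
end
end

section
/- Let {t_n}_{n≥0} be a determinate Stieltjes moment sequence with (unique) representing measure μ, let θ > 0, set t_{-1} = θ, and suppose {t_{n-1}}_{n≥0} is a Stieltjes moment sequence. Then {t_{n-1}}_{n≥0} is determinate, μ satisfies ∫_0^∞ (1/s) dμ(s) ≤ θ, and the unique representing measure of {t_{n-1}}_{n≥0} is ν_μ, where ν_μ(σ) = ∫_σ (1/s) dμ(s) + (θ − ∫_0^∞ (1/s) dμ(s)) δ₀(σ) for Borel σ ⊆ ℝ₊. -/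
open Filter
open scoped ENNReal InnerProductSpace ComplexConjugate

attribute [local instance] Classical.propDecidable

noncomputable section

open Paper MeasureTheory Filter
open scoped ENNReal



section Stmt6Aux

open MeasureTheory

private lemma stmt6_key (t : ℕ → ℝ) (θ : ℝ) (μ : Measure ℝ)
    (hμ : IsRepMeasure μ t) (hdet : Determinate t)
    (ν : Measure ℝ) (hν : IsRepMeasure ν (prepend θ t)) :
    ν = numap θ μ ∧ recipInt μ Set.univ ≤ ENNReal.ofReal θ := by
  obtain ⟨hν0, hνm⟩ := hν
  -- ν is finite with total mass ofReal θ
  have hfin : ν Set.univ < ∞ := by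
    have h1 := (hνm 0).1
    simp only [pow_zero] at h1
    rcases integrable_const_iff.mp h1 with h | h
    · exact absurd h one_ne_zero
    · exact h.measure_univ_lt_top
  have hνuniv : ν Set.univ = ENNReal.ofReal θ := by
    have h0 := (hνm 0).2
    simp only [prepend, pow_zero, integral_const, smul_eq_mul, mul_one] at h0
    rw [h0, measureReal_def, ENNReal.ofReal_toReal hfin.ne]
  have hae : ∀ᵐ s ∂ν, 0 ≤ s := by
    rw [ae_iff]
    convert hν0 using 2
    ext s; simp [not_le]
  -- mumap ν is a representing measure of t
  have hmeas : Measurable Real.toNNReal := measurable_real_toNNReal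
  have hdens : mumap ν = ν.withDensity (fun s => (Real.toNNReal s : ℝ≥0∞)) := rfl
  have hrep : IsRepMeasure (mumap ν) t := by
    constructor
    · rw [mumap, withDensity_apply _ measurableSet_Iio]
      exact setLIntegral_measure_zero _ _ hν0
    · intro n
      have haeeq : (fun s : ℝ => Real.toNNReal s • s ^ n) =ᵐ[ν] (fun s => s ^ (n + 1)) := by
        filter_upwards [hae] with s hs
        simp [NNReal.smul_def, Real.coe_toNNReal s hs, pow_succ, mul_comm]
      constructor
      · rw [hdens, integrable_withDensity_iff_integrable_smul hmeas]
        exact ((hνm (n + 1)).1).congr haeeq.symm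
      · rw [hdens, integral_withDensity_eq_integral_smul hmeas, integral_congr_ae haeeq]
        exact (hνm (n + 1)).2
  have hμeq : μ = mumap ν := hdet hμ hrep
  -- μ.withDensity (1/s) = ν restricted to (0,∞)
  have hf : Measurable (fun s : ℝ => ENNReal.ofReal s) := ENNReal.measurable_ofReal
  have hmul : (fun s : ℝ => ENNReal.ofReal s) * (fun s => (ENNReal.ofReal s)⁻¹)
      = Set.indicator (Set.Ioi 0) 1 := by
    funext s
    by_cases hs : 0 < s
    · simp only [Pi.mul_apply, Set.indicator_of_mem (Set.mem_Ioi.mpr hs), Pi.one_apply]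
      exact ENNReal.mul_inv_cancel (by simp [ENNReal.ofReal_pos, hs]) ENNReal.ofReal_ne_top
    · simp [Pi.mul_apply, Set.indicator_of_notMem, hs,
        ENNReal.ofReal_eq_zero.mpr (not_lt.mp hs)]
  have hwd : μ.withDensity (fun s => (ENNReal.ofReal s)⁻¹) = ν.restrict (Set.Ioi 0) := by
    rw [hμeq, mumap, ← withDensity_mul _ (g := fun s : ℝ => (ENNReal.ofReal s)⁻¹) hf hf.inv, hmul,
      withDensity_indicator measurableSet_Ioi, withDensity_one]
  have hrecip : recipInt μ Set.univ = ν (Set.Ioi 0) := by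
    rw [recipInt, ← withDensity_apply _ MeasurableSet.univ, hwd,
      Measure.restrict_apply_univ]
  have hIoi_le : ν (Set.Ioi 0) ≤ ENNReal.ofReal θ :=
    hνuniv ▸ measure_mono (Set.subset_univ _)
  -- total mass bookkeeping
  have hIci : ν (Set.Ici 0) = ENNReal.ofReal θ := by
    refine le_antisymm (hνuniv ▸ measure_mono (Set.subset_univ _)) ?_
    have huniv : Set.Ici (0:ℝ) ∪ Set.Iio 0 = Set.univ := by
      ext s; simp [le_or_gt]
    calc ENNReal.ofReal θ = ν (Set.Ici 0 ∪ Set.Iio 0) := by rw [huniv, hνuniv]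
      _ ≤ ν (Set.Ici 0) + ν (Set.Iio 0) := measure_union_le _ _
      _ = ν (Set.Ici 0) := by rw [hν0, add_zero]
  have hsplitset : ({(0:ℝ)} : Set ℝ) ∪ Set.Ioi 0 = Set.Ici 0 := by
    ext s; simp [le_iff_lt_or_eq, eq_comm, or_comm]
  have h0eq : ν {0} = ENNReal.ofReal θ - ν (Set.Ioi 0) := by
    refine ENNReal.eq_sub_of_add_eq (lt_of_le_of_lt hIoi_le ENNReal.ofReal_lt_top).ne ?_
    rw [← measure_union (by simp [Set.disjoint_left]) measurableSet_Ioi, hsplitset, hIci]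
  -- split ν
  have hIic_ae : Set.Iic (0:ℝ) =ᵐ[ν] ({0} : Set ℝ) := by
    have h1 : Set.Iic (0:ℝ) \ {0} = Set.Iio 0 := by
      ext s; simp [lt_iff_le_and_ne]
    have h2 : ({0} : Set ℝ) \ Set.Iic 0 = ∅ := by
      ext s; simp; exact fun h => h.le
    rw [MeasureTheory.ae_eq_set, h1, h2]
    exact ⟨hν0, measure_empty⟩
  have hν_split : ν = ν.restrict (Set.Ioi 0) + ν {0} • Measure.dirac 0 := by
    have h := Measure.restrict_add_restrict_compl (μ := ν) (s := Set.Ioi 0) measurableSet_Ioi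
    rw [Set.compl_Ioi, Measure.restrict_congr_set hIic_ae, Measure.restrict_singleton] at h
    exact h.symm
  refine ⟨?_, hrecip ▸ hIoi_le⟩
  rw [numap, hwd, hrecip, ← h0eq, ← hν_split]

end Stmt6Aux

/-- determinacy of backward extensions. -/
theorem stmt6 (t : ℕ → ℝ) (θ : ℝ) (hθ : 0 < θ) (μ : Measure ℝ)
    (hμ : IsRepMeasure μ t) (hdet : Determinate t)
    (hS' : IsStieltjes (prepend θ t)) :
    Determinate (prepend θ t) ∧
    recipInt μ Set.univ ≤ ENNReal.ofReal θ ∧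
    IsRepMeasure (numap θ μ) (prepend θ t) := by
  obtain ⟨ν, hν⟩ := hS'
  obtain ⟨hνeq, hle⟩ := stmt6_key t θ μ hμ hdet ν hν
  refine ⟨?_, hle, hνeq ▸ hν⟩
  intro ν₁ ν₂ h1 h2
  rw [(stmt6_key t θ μ hμ hdet ν₁ h1).1, (stmt6_key t θ μ hμ hdet ν₂ h2).1]
end
end

section
/- Let {t_n}_{n≥0} be a Stieltjes moment sequence, let θ > 0, set t_{-1} = θ, and suppose that {t_{n-1}}_{n≥0} is a Stieltjes moment sequence and t_0 > 0. Then t_n > 0 for all n ≥ 0, and for every representing measure μ of {t_n}_{n≥0} with ∫_0^∞ (1/s) dμ(s) ≤ θ one has sup_{n≥0} t_n²/t_{2n+1} ≤ ∫_0^∞ (1/s) dμ(s) ≤ θ. -/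
open Filter
open scoped ENNReal InnerProductSpace ComplexConjugate

attribute [local instance] Classical.propDecidable

noncomputable section

open Paper MeasureTheory Filter
open scoped ENNReal


/-- positivity and the estimate `sup_n t_n²/t_{2n+1} ≤ ∫ (1/s) dμ ≤ θ`. -/
theorem stmt7 (t : ℕ → ℝ) (θ : ℝ) (hθ : 0 < θ) (hS : IsStieltjes t)
    (hS' : IsStieltjes (prepend θ t)) (ht0 : 0 < t 0) :
    (∀ n : ℕ, 0 < t n) ∧
    ∀ μ : Measure ℝ, IsRepMeasure μ t → recipInt μ Set.univ ≤ ENNReal.ofReal θ →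
      (⨆ n : ℕ, ENNReal.ofReal (t n ^ 2 / t (2 * n + 1))) ≤ recipInt μ Set.univ ∧
        recipInt μ Set.univ ≤ ENNReal.ofReal θ := by

  -- Part 1: positivity of all `t n` via the representing measure of the prepended sequence.
  obtain ⟨ν, hν0, hνint⟩ := hS'
  have hνnn : ∀ᵐ s ∂ν, 0 ≤ s := by
    rw [ae_iff]
    have : {s : ℝ | ¬ 0 ≤ s} = Set.Iio 0 := by ext s; simp [not_le]
    rw [this]; exact hν0
  have hsupp : ∀ k : ℕ, k ≠ 0 → Function.support (fun s : ℝ => s ^ k) = {(0:ℝ)}ᶜ := by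
    intro k hk
    ext s
    simp [Function.mem_support, pow_ne_zero_iff hk]
  have hiff : ∀ k : ℕ, k ≠ 0 →
      (0 < ∫ s, s ^ k ∂ν ↔ 0 < ν ({(0:ℝ)}ᶜ)) := by
    intro k hk
    rw [integral_pos_iff_support_of_nonneg_ae
      (hνnn.mono fun s hs => pow_nonneg hs k) (hνint k).1, hsupp k hk]
  have ht0' : (0:ℝ) < ∫ s, s ^ 1 ∂ν := by
    have := (hνint 1).2
    simp only [prepend] at this
    rw [← this]; exact ht0
  have hνpos : 0 < ν ({(0:ℝ)}ᶜ) := (hiff 1 one_ne_zero).1 ht0'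
  have hpos : ∀ n : ℕ, 0 < t n := by
    intro n
    have := (hνint (n + 1)).2
    simp only [prepend] at this
    rw [this]
    exact (hiff (n + 1) (Nat.succ_ne_zero n)).2 hνpos
  refine ⟨hpos, ?_⟩
  intro μ hμ hrec
  obtain ⟨hμ0, hμint⟩ := hμ
  refine ⟨?_, hrec⟩
  have hA : recipInt μ Set.univ = ∫⁻ s, (ENNReal.ofReal s)⁻¹ ∂μ := by
    simp [recipInt]
  set A := recipInt μ Set.univ with hAdef
  have hAne : A ≠ ∞ := fun h => by simp [h] at hrec
  have hμnn : ∀ᵐ s ∂μ, 0 ≤ s := by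
    rw [ae_iff]
    have : {s : ℝ | ¬ 0 ≤ s} = Set.Iio 0 := by ext s; simp [not_le]
    rw [this]; exact hμ0
  -- μ has no atom at 0
  have hμzero : μ {(0:ℝ)} = 0 := by
    by_contra h
    have hle : (ENNReal.ofReal (0:ℝ))⁻¹ * μ {(0:ℝ)} ≤ A := by
      rw [hA]
      calc (ENNReal.ofReal (0:ℝ))⁻¹ * μ {(0:ℝ)}
          = ∫⁻ s in {(0:ℝ)}, (ENNReal.ofReal s)⁻¹ ∂μ := (lintegral_singleton (μ := μ) (fun s : ℝ => (ENNReal.ofReal s)⁻¹) 0).symm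
        _ ≤ ∫⁻ s, (ENNReal.ofReal s)⁻¹ ∂μ := setLIntegral_le_lintegral _ _
    simp only [ENNReal.ofReal_zero, ENNReal.inv_zero] at hle
    rw [ENNReal.top_mul h] at hle
    exact hAne (top_le_iff.1 hle)
  have hμpos : ∀ᵐ s ∂μ, 0 < s := by
    rw [ae_iff]
    have : {s : ℝ | ¬ 0 < s} = Set.Iio 0 ∪ {(0:ℝ)} := by
      ext s; simp [not_lt, le_iff_lt_or_eq, or_comm]
    rw [this]
    exact le_antisymm (le_trans (measure_union_le _ _) (by rw [hμ0, hμzero]; simp))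
      (zero_le)
  have hB : ∀ n : ℕ, ENNReal.ofReal (t n) = ∫⁻ s, ENNReal.ofReal (s ^ n) ∂μ := by
    intro n
    rw [(hμint n).2]
    exact ofReal_integral_eq_lintegral_ofReal (hμint n).1
      (hμnn.mono fun s hs => pow_nonneg hs n)
  refine iSup_le fun n => ?_
  set f : ℝ → ℝ≥0∞ := fun s => ((ENNReal.ofReal s)⁻¹) ^ (1/2 : ℝ) with hfdef
  set g : ℝ → ℝ≥0∞ := fun s => (ENNReal.ofReal (s ^ (2*n+1))) ^ (1/2 : ℝ) with hgdef
  have hconj : Real.HolderConjugate 2 2 := Real.HolderConjugate.two_two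
  have hfm : Measurable f := (ENNReal.measurable_ofReal.inv).pow_const _
  have hgm : Measurable g :=
    ((ENNReal.measurable_ofReal.comp (measurable_id.pow_const _)).pow_const _)
  have hCS := ENNReal.lintegral_mul_le_Lp_mul_Lq μ hconj hfm.aemeasurable hgm.aemeasurable
  have hsq : ∀ x : ℝ≥0∞, (x ^ (1/2 : ℝ)) ^ (2:ℝ) = x := by
    intro x
    rw [← ENNReal.rpow_mul]
    norm_num
  have hf2 : ∫⁻ s, f s ^ (2:ℝ) ∂μ = A := by
    rw [hA]; exact lintegral_congr fun s => hsq _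
  have hg2 : ∫⁻ s, g s ^ (2:ℝ) ∂μ = ENNReal.ofReal (t (2*n+1)) := by
    rw [hB]; exact lintegral_congr fun s => hsq _
  have hfg : ∀ᵐ s ∂μ, (f * g) s = ENNReal.ofReal (s ^ n) := by
    filter_upwards [hμpos] with s hs
    have h1 : ENNReal.ofReal s ≠ 0 := (ENNReal.ofReal_pos.mpr hs).ne'
    simp only [Pi.mul_apply, hfdef, hgdef]
    rw [← ENNReal.mul_rpow_of_nonneg _ _ (by norm_num : (0:ℝ) ≤ 1/2)]
    have h2 : s ^ (2*n+1) = s * (s ^ n) ^ 2 := by ring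
    rw [h2, ENNReal.ofReal_mul hs.le, ← mul_assoc,
      ENNReal.inv_mul_cancel h1 ENNReal.ofReal_ne_top, one_mul,
      ENNReal.ofReal_pow (pow_nonneg hs.le n), ← ENNReal.rpow_natCast _ 2,
      ← ENNReal.rpow_mul]
    norm_num
  have hmain : ENNReal.ofReal (t n) ≤ A ^ (1/2:ℝ) * (ENNReal.ofReal (t (2*n+1))) ^ (1/2:ℝ) := by
    rw [hB n, ← lintegral_congr_ae hfg]
    calc ∫⁻ s, (f * g) s ∂μ
        ≤ (∫⁻ s, f s ^ (2:ℝ) ∂μ) ^ (1/(2:ℝ)) * (∫⁻ s, g s ^ (2:ℝ) ∂μ) ^ (1/(2:ℝ)) := hCS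
      _ = A ^ (1/2:ℝ) * (ENNReal.ofReal (t (2*n+1))) ^ (1/2:ℝ) := by rw [hf2, hg2]
  have hsq2 : ENNReal.ofReal (t n) ^ 2 ≤ A * ENNReal.ofReal (t (2*n+1)) := by
    calc ENNReal.ofReal (t n) ^ 2
        ≤ (A ^ (1/2:ℝ) * (ENNReal.ofReal (t (2*n+1))) ^ (1/2:ℝ)) ^ 2 := by
          rw [pow_two, pow_two]; exact mul_le_mul' hmain hmain
      _ = A * ENNReal.ofReal (t (2*n+1)) := by
          rw [mul_pow, ← ENNReal.rpow_natCast (A ^ (1/2:ℝ)),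
            ← ENNReal.rpow_natCast ((ENNReal.ofReal (t (2*n+1))) ^ (1/2:ℝ)),
            ← ENNReal.rpow_mul, ← ENNReal.rpow_mul]
          norm_num
  have h21 : 0 < t (2*n+1) := hpos _
  rw [ENNReal.ofReal_div_of_pos h21,
    ENNReal.div_le_iff (ENNReal.ofReal_pos.mpr h21).ne' ENNReal.ofReal_ne_top,
    ENNReal.ofReal_pow (hpos n).le]
  exact hsq2
end
end

section
/- Let S_λ be a weighted shift on a directed tree T with weights λ = {λ_v}_{v∈V°} such that E ⊆ D∞(S_λ). Assume that for every u ∈ V with Chi(u) ≠ ∅ the sequence {‖S_λⁿ e_u‖²}_{n≥0} is a Stieltjes moment sequence and the Stieltjes moment sequence {‖S_λ^{n+1} e_u‖²}_{n≥0} is determinate. Then there exist a system {μ_u}_{u∈V} of Borel probability measures on ℝ₊ and a system {ε_u}_{u∈V} of nonnegative real numbers such that for every u ∈ V and every Borel σ ⊆ ℝ₊: μ_u(σ) = Σ_{v∈Chi(u)} |λ_v|² ∫_σ (1/s) dμ_v(s) + ε_u δ₀(σ). -/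
open Filter
open scoped ENNReal InnerProductSpace ComplexConjugate

attribute [local instance] Classical.propDecidable

noncomputable section

open Paper MeasureTheory Filter
open scoped ENNReal



namespace Stmt13Aux

open Paper MeasureTheory Filter
open scoped ENNReal

variable {V : Type*} (t : Paper.DirectedTree V) (lam : V → ℂ)

lemma par_eq {x w : V} (h : t.E x w) : t.par w = x := by
  have hp : t.hasPar w := ⟨x, h⟩
  rw [DirectedTree.par, dif_pos hp]
  exact t.par_unique hp.choose_spec h

lemma mem_chin_zero {u w : V} : w ∈ t.chin 0 u ↔ w = u := Iff.rfl

lemma mem_chin_succ' {n : ℕ} {u w : V} :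
    w ∈ t.chin (n + 1) u ↔ ∃ x, x ∈ t.chin n u ∧ t.E x w := Iff.rfl

lemma mem_chin_succ {n : ℕ} {u w : V} :
    w ∈ t.chin (n + 1) u ↔ ∃ v, t.E u v ∧ w ∈ t.chin n v := by
  induction n generalizing w with
  | zero =>
    constructor
    · intro h
      obtain ⟨x, hx, hxw⟩ := (mem_chin_succ' t).mp h
      rw [mem_chin_zero t] at hx
      subst hx
      exact ⟨w, hxw, (mem_chin_zero t).mpr rfl⟩
    · rintro ⟨v, huv, hwv⟩
      rw [mem_chin_zero t] at hwv
      subst hwv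
      exact (mem_chin_succ' t).mpr ⟨u, (mem_chin_zero t).mpr rfl, huv⟩
  | succ n ih =>
    constructor
    · intro h
      obtain ⟨x, hx, hxw⟩ := (mem_chin_succ' t).mp h
      obtain ⟨v, huv, hxv⟩ := ih.mp hx
      exact ⟨v, huv, (mem_chin_succ' t).mpr ⟨x, hxv, hxw⟩⟩
    · rintro ⟨v, huv, hw⟩
      obtain ⟨x, hxv, hxw⟩ := (mem_chin_succ' t).mp hw
      exact (mem_chin_succ' t).mpr ⟨x, ih.mpr ⟨v, huv, hxv⟩, hxw⟩

lemma par_iter_of_mem_chin {n : ℕ} {v w : V} (h : w ∈ t.chin n v) :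
    t.par^[n] w = v := by
  induction n generalizing v w with
  | zero => exact (mem_chin_zero t).mp h
  | succ n ih =>
    obtain ⟨x, hvx, hw⟩ := (mem_chin_succ t).mp h
    rw [Function.iterate_succ_apply', ih hw, par_eq t hvx]

lemma wprod_zero (w : V) : t.wprod lam 0 w = 1 := by
  simp [DirectedTree.wprod]

lemma wprod_succ (n : ℕ) (w : V) :
    t.wprod lam (n + 1) w = t.wprod lam n w * lam (t.par^[n] w) :=
  Finset.prod_range_succ _ _

lemma wprod_succ' (n : ℕ) (w : V) :
    t.wprod lam (n + 1) w = t.wprod lam n (t.par w) * lam w := by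
  simp only [DirectedTree.wprod, Finset.prod_range_succ']
  rfl

/-- The coefficient function of `S_λ^n e_u`. -/
noncomputable def Ffun (n : ℕ) (u : V) : V → ℂ :=
  fun w => if w ∈ t.chin n u then t.wprod lam n w else 0

lemma lamLin_apply (f : V → ℂ) (w : V) :
    Paper.lamLin t lam f w = if t.hasPar w then lam w * f (t.par w) else 0 := rfl

lemma lamLin_Ffun (n : ℕ) (u : V) :
    Paper.lamLin t lam (Ffun t lam n u) = Ffun t lam (n + 1) u := by
  funext w
  rw [lamLin_apply]
  by_cases hp : t.hasPar w
  · rw [if_pos hp]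
    by_cases hc : t.par w ∈ t.chin n u
    · have hEw : t.E (t.par w) w := by
        obtain ⟨x, hx⟩ := hp
        rw [par_eq t hx]; exact hx
      have hw : w ∈ t.chin (n + 1) u := (mem_chin_succ' t).mpr ⟨t.par w, hc, hEw⟩
      simp only [Ffun]
      rw [if_pos hc, if_pos hw, wprod_succ' t lam]
      ring
    · have hw : w ∉ t.chin (n + 1) u := by
        intro h
        obtain ⟨x, hx, hxw⟩ := (mem_chin_succ' t).mp h
        exact hc (by rw [par_eq t hxw]; exact hx)
      simp only [Ffun]
      rw [if_neg hc, if_neg hw, mul_zero]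
  · rw [if_neg hp]
    have hw : w ∉ t.chin (n + 1) u := by
      intro h
      obtain ⟨x, hx, hxw⟩ := (mem_chin_succ' t).mp h
      exact hp ⟨x, hxw⟩
    simp only [Ffun]
    rw [if_neg hw]

lemma coe_shift_apply (f : ↥(Paper.shift t lam).domain) :
    ⇑((Paper.shift t lam) f) = Paper.lamLin t lam ⇑(f : H2 V) := rfl

lemma iterMem_step {T : H2 V →ₗ.[ℂ] H2 V} {f : H2 V}
    (h : ∀ m, iterMem T m f) (hd : f ∈ T.domain) :
    ∀ m, iterMem T m (T ⟨f, hd⟩) := by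
  intro m
  obtain ⟨hd', hm⟩ := h (m + 1)
  exact hm

lemma coe_iterApp (n : ℕ) (f : H2 V) (h : ∀ m, iterMem (Paper.shift t lam) m f) :
    ⇑(iterApp (Paper.shift t lam) n f) =
      (fun g : V → ℂ => Paper.lamLin t lam g)^[n] ⇑f := by
  induction n generalizing f with
  | zero => rfl
  | succ n ih =>
    obtain ⟨hd, -⟩ := h 1
    have heq : iterApp (Paper.shift t lam) (n + 1) f =
        iterApp (Paper.shift t lam) n ((Paper.shift t lam) ⟨f, hd⟩) := by
      simp only [iterApp]
      rw [dif_pos hd]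
    rw [heq, ih _ (iterMem_step h hd), coe_shift_apply, ← Function.iterate_succ_apply]

lemma coe_evec (u : V) : ⇑(evec (V := V) u) = Ffun t lam 0 u := by
  classical
  funext w
  by_cases hw : w = u
  · subst hw
    show lp.single 2 w 1 w = _
    rw [lp.single_apply_self]
    simp only [Ffun]
    rw [if_pos ((mem_chin_zero t).mpr rfl), wprod_zero]
  · show lp.single 2 u 1 w = _
    rw [lp.single_apply_ne 2 u _ hw]
    simp only [Ffun]
    rw [if_neg (fun h => hw ((mem_chin_zero t).mp h))]

lemma coe_iterApp_evec (hdom : spanDomInfty t lam) (n : ℕ) (u : V) :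
    ⇑(iterApp (Paper.shift t lam) n (evec u)) = Ffun t lam n u := by
  have h : ∀ m, iterMem (Paper.shift t lam) m (evec u) :=
    fun m => hdom (evec u) (Submodule.subset_span ⟨u, rfl⟩) m
  rw [coe_iterApp t lam n _ h, coe_evec t lam u]
  induction n with
  | zero => rfl
  | succ n ih => rw [Function.iterate_succ_apply', ih, lamLin_Ffun]

lemma two_toReal : ((2 : ℝ≥0∞)).toReal = ((2 : ℕ) : ℝ) := by simp

/-- The real moment sequence `t_n(u) = ‖S_λ^n e_u‖²`. -/
noncomputable def tv (n : ℕ) (u : V) : ℝ :=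
  ‖iterApp (Paper.shift t lam) n (evec u)‖ ^ 2

lemma tv_nonneg (n : ℕ) (u : V) : 0 ≤ tv t lam n u := sq_nonneg _

lemma tv_eq_tsum (hdom : spanDomInfty t lam) (n : ℕ) (u : V) :
    tv t lam n u = ∑' w, ‖Ffun t lam n u w‖ ^ 2 := by
  have hp : 0 < (2 : ℝ≥0∞).toReal := by rw [two_toReal]; norm_num
  have h := lp.norm_rpow_eq_tsum hp (iterApp (Paper.shift t lam) n (evec u))
  rw [two_toReal] at h
  simp only [Real.rpow_natCast] at h
  rw [tv, h]
  exact tsum_congr fun w => by rw [coe_iterApp_evec t lam hdom]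

lemma summable_Ffun (hdom : spanDomInfty t lam) (n : ℕ) (u : V) :
    Summable fun w => ‖Ffun t lam n u w‖ ^ 2 := by
  have hp : 0 < (2 : ℝ≥0∞).toReal := by rw [two_toReal]; norm_num
  have h := (memℓp_gen_iff hp).mp (lp.memℓp (iterApp (Paper.shift t lam) n (evec u)))
  rw [two_toReal] at h
  simp only [Real.rpow_natCast] at h
  exact h.congr fun w => by rw [coe_iterApp_evec t lam hdom]

/-- The `ℝ≥0∞`-valued moment sequence. -/
noncomputable def TT (n : ℕ) (u : V) : ℝ≥0∞ :=
  ∑' w, ENNReal.ofReal (‖Ffun t lam n u w‖ ^ 2)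

lemma ofReal_tv (hdom : spanDomInfty t lam) (n : ℕ) (u : V) :
    ENNReal.ofReal (tv t lam n u) = TT t lam n u := by
  rw [tv_eq_tsum t lam hdom,
    ENNReal.ofReal_tsum_of_nonneg (fun w => sq_nonneg _) (summable_Ffun t lam hdom n u)]
  rfl

lemma mem_chi_iff {u v : V} : v ∈ t.chi u ↔ t.E u v := Iff.rfl

lemma ptwise (n : ℕ) (u : V) (w : V) :
    ENNReal.ofReal (‖Ffun t lam (n + 1) u w‖ ^ 2) =
      ∑' v : t.chi u,
        ENNReal.ofReal (‖lam (v : V)‖ ^ 2) * ENNReal.ofReal (‖Ffun t lam n (v : V) w‖ ^ 2) := by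
  by_cases hw : ∃ v, t.E u v ∧ w ∈ t.chin n v
  · obtain ⟨v₀, hv₀, hw₀⟩ := hw
    have huniq : ∀ v : t.chi u, (v : V) ≠ v₀ → Ffun t lam n (v : V) w = 0 := by
      rintro ⟨v, hv⟩ hne
      simp only [Ffun]
      rw [if_neg]
      intro h
      have h1 := par_iter_of_mem_chin t h
      have h2 := par_iter_of_mem_chin t hw₀
      exact hne (h1 ▸ h2)
    rw [tsum_eq_single (⟨v₀, hv₀⟩ : t.chi u) (by
      rintro b hb
      have : (b : V) ≠ v₀ := fun h => hb (Subtype.ext h)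
      rw [huniq b this]
      simp)]
    have hwmem : w ∈ t.chin (n + 1) u := (mem_chin_succ t).mpr ⟨v₀, hv₀, hw₀⟩
    simp only [Ffun]
    rw [if_pos hwmem, if_pos hw₀, wprod_succ t lam, par_iter_of_mem_chin t hw₀, norm_mul,
      mul_pow, ENNReal.ofReal_mul (sq_nonneg _)]
    ring
  · push_neg at hw
    have h1 : w ∉ t.chin (n + 1) u := fun h => by
      obtain ⟨v, hv, hwv⟩ := (mem_chin_succ t).mp h
      exact hw v hv hwv
    have h2 : ∀ v : t.chi u, Ffun t lam n (v : V) w = 0 := by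
      rintro ⟨v, hv⟩
      simp only [Ffun]
      rw [if_neg (hw v hv)]
    simp only [Ffun]
    rw [if_neg h1]
    symm
    calc (∑' v : t.chi u,
        ENNReal.ofReal (‖lam (v : V)‖ ^ 2) * ENNReal.ofReal (‖Ffun t lam n (v : V) w‖ ^ 2))
        = ∑' _v : t.chi u, 0 := tsum_congr fun v => by rw [h2 v]; simp
      _ = 0 := tsum_zero
      _ = ENNReal.ofReal (‖(0 : ℂ)‖ ^ 2) := by simp

lemma TT_succ (n : ℕ) (u : V) :
    TT t lam (n + 1) u =
      ∑' v : t.chi u, ENNReal.ofReal (‖lam (v : V)‖ ^ 2) * TT t lam n (v : V) := by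
  rw [TT]
  calc (∑' w, ENNReal.ofReal (‖Ffun t lam (n + 1) u w‖ ^ 2))
      = ∑' w, ∑' v : t.chi u,
          ENNReal.ofReal (‖lam (v : V)‖ ^ 2) * ENNReal.ofReal (‖Ffun t lam n (v : V) w‖ ^ 2) :=
        tsum_congr fun w => ptwise t lam n u w
    _ = ∑' v : t.chi u, ∑' w,
          ENNReal.ofReal (‖lam (v : V)‖ ^ 2) * ENNReal.ofReal (‖Ffun t lam n (v : V) w‖ ^ 2) :=
        ENNReal.tsum_comm
    _ = _ := tsum_congr fun v => ENNReal.tsum_mul_left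

lemma ofReal_tv_succ (hdom : spanDomInfty t lam) (n : ℕ) (u : V) :
    ENNReal.ofReal (tv t lam (n + 1) u) =
      ∑' v : t.chi u,
        ENNReal.ofReal (‖lam (v : V)‖ ^ 2) * ENNReal.ofReal (tv t lam n (v : V)) := by
  rw [ofReal_tv t lam hdom, TT_succ]
  exact tsum_congr fun v => by rw [ofReal_tv t lam hdom]

lemma tv_zero (u : V) : tv t lam 0 u = 1 := by
  have hp : 0 < (2 : ℝ≥0∞).toReal := by rw [two_toReal]; norm_num
  have : ‖(evec u : H2 V)‖ = 1 := by
    classical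
    have h := lp.norm_single (E := fun _ : V => ℂ) (p := 2) (by norm_num) u (1 : ℂ)
    simpa [evec] using h
  show ‖iterApp (Paper.shift t lam) 0 (evec u)‖ ^ 2 = 1
  rw [show iterApp (Paper.shift t lam) 0 (evec u) = evec u from rfl, this, one_pow]

lemma ae_nonneg {m : Measure ℝ} (h0 : m (Set.Iio 0) = 0) : ∀ᵐ s ∂m, 0 ≤ s := by
  have h : {s : ℝ | ¬ 0 ≤ s} = Set.Iio 0 := by ext s; simp [not_le]
  rw [MeasureTheory.ae_iff, h]
  exact h0

lemma isRep_of_lintegral (m : Measure ℝ) (ts : ℕ → ℝ) (hnn : ∀ n, 0 ≤ ts n)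
    (h0 : m (Set.Iio 0) = 0)
    (H : ∀ n, ∫⁻ s, ENNReal.ofReal (s ^ n) ∂m = ENNReal.ofReal (ts n)) :
    IsRepMeasure m ts := by
  have hae := ae_nonneg h0
  refine ⟨h0, fun n => ?_⟩
  have haen : 0 ≤ᵐ[m] fun s : ℝ => s ^ n := hae.mono fun s hs => pow_nonneg hs n
  have hint : Integrable (fun s : ℝ => s ^ n) m := by
    refine ⟨(continuous_pow n).aestronglyMeasurable, ?_⟩
    rw [hasFiniteIntegral_iff_ofReal haen, H n]
    exact ENNReal.ofReal_lt_top
  refine ⟨hint, ?_⟩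
  rw [integral_eq_lintegral_of_nonneg_ae haen hint.1, H n, ENNReal.toReal_ofReal (hnn n)]

lemma lintegral_of_isRep {m : Measure ℝ} {ts : ℕ → ℝ} (h : IsRepMeasure m ts) (n : ℕ) :
    ∫⁻ s, ENNReal.ofReal (s ^ n) ∂m = ENNReal.ofReal (ts n) := by
  obtain ⟨hint, hval⟩ := h.2 n
  rw [hval]
  exact (ofReal_integral_eq_lintegral_ofReal hint
    ((ae_nonneg h.1).mono fun s hs => pow_nonneg hs n)).symm

end Stmt13Aux

/-- determinacy yields a consistent system of probability measures. -/
theorem stmt13 {V : Type*} (t : Paper.DirectedTree V) (lam : V → ℂ)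
    (hdom : spanDomInfty t lam)
    (hmom : ∀ u : V, (t.chi u).Nonempty →
      IsStieltjes (fun n => ‖iterApp (shift t lam) n (evec u)‖ ^ 2) ∧
      Determinate fun n => ‖iterApp (shift t lam) (n + 1) (evec u)‖ ^ 2) :
    ∃ (μ : V → Measure ℝ) (ε : V → ℝ),
      (∀ u : V, IsProbabilityMeasure (μ u) ∧ μ u (Set.Iio 0) = 0) ∧
      (∀ u : V, 0 ≤ ε u) ∧
      ∀ u : V, Consistent t lam μ ε u := by
  classical
  open Stmt13Aux in
  -- the chosen representing measures
  refine ?_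
  let μ : V → Measure ℝ := fun u =>
    if h : (t.chi u).Nonempty then ((hmom u h).1).choose else Measure.dirac 0
  have hrep : ∀ u, IsRepMeasure (μ u) (fun n => tv t lam n u) := by
    intro u
    by_cases h : (t.chi u).Nonempty
    · simp only [μ, dif_pos h]
      exact ((hmom u h).1).choose_spec
    · simp only [μ, dif_neg h]
      haveI : IsEmpty ↥(t.chi u) :=
        Set.isEmpty_coe_sort.mpr (Set.not_nonempty_iff_eq_empty.mp h)
      refine isRep_of_lintegral _ _ (fun n => tv_nonneg t lam n u) (by simp) ?_
      intro n
      rw [lintegral_dirac (0 : ℝ) (fun s => ENNReal.ofReal (s ^ n))]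
      cases n with
      | zero => simp [tv_zero t lam u]
      | succ n =>
        rw [ofReal_tv_succ t lam hdom, tsum_empty]
        simp
  have hIio : ∀ u, μ u (Set.Iio 0) = 0 := fun u => (hrep u).1
  have hprob : ∀ u, IsProbabilityMeasure (μ u) := by
    intro u
    obtain ⟨hint, hval⟩ := (hrep u).2 0
    simp only [pow_zero] at hint hval
    have hfin : μ u Set.univ < ∞ := by
      rcases integrable_const_iff.mp hint with h1 | h2
      · exact absurd h1 one_ne_zero
      · exact h2.measure_univ_lt_top
    constructor
    rw [← ENNReal.toReal_eq_one_iff]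
    rw [tv_zero t lam u, integral_const, smul_eq_mul, mul_one] at hval
    exact hval.symm
  let ε : V → ℝ := fun u => (μ u {0}).toReal
  refine ⟨μ, ε, fun u => ⟨hprob u, hIio u⟩, fun u => ENNReal.toReal_nonneg, ?_⟩
  intro u
  intro σ hσ
  by_cases hch : (t.chi u).Nonempty
  · -- the main case: u has children
    haveI := hprob u
    set ν : Measure ℝ :=
      Measure.sum (fun v : t.chi u => ENNReal.ofReal (‖lam (v : V)‖ ^ 2) • μ (v : V)) with hν
    have hνIio : ν (Set.Iio 0) = 0 := by
      rw [hν, Measure.sum_apply _ measurableSet_Iio]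
      refine ENNReal.tsum_eq_zero.mpr fun v => ?_
      rw [Measure.smul_apply, smul_eq_mul, hIio, mul_zero]
    have hνlint : ∀ n, ∫⁻ s, ENNReal.ofReal (s ^ n) ∂ν =
        ENNReal.ofReal (tv t lam (n + 1) u) := by
      intro n
      rw [hν, lintegral_sum_measure, ofReal_tv_succ t lam hdom]
      exact tsum_congr fun v => by
        rw [lintegral_smul_measure, lintegral_of_isRep (hrep (v : V)), smul_eq_mul]
    have hB : IsRepMeasure ν (fun n => tv t lam (n + 1) u) :=
      isRep_of_lintegral _ _ (fun n => tv_nonneg t lam _ u) hνIio hνlint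
    have hmA : (mumap (μ u)) (Set.Iio 0) = 0 := by
      rw [mumap, withDensity_apply _ measurableSet_Iio]
      exact setLIntegral_measure_zero _ _ (hIio u)
    have hAlint : ∀ n, ∫⁻ s, ENNReal.ofReal (s ^ n) ∂(mumap (μ u)) =
        ENNReal.ofReal (tv t lam (n + 1) u) := by
      intro n
      have hg : Measurable fun s : ℝ => ENNReal.ofReal (s ^ n) :=
        ENNReal.measurable_ofReal.comp (measurable_id.pow_const n)
      rw [mumap, lintegral_withDensity_eq_lintegral_mul _ ENNReal.measurable_ofReal hg]
      have hae : ∀ᵐ s ∂(μ u), 0 ≤ s := ae_nonneg (hIio u)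
      have : ∫⁻ s, (fun a => ENNReal.ofReal a) s * ENNReal.ofReal (s ^ n) ∂(μ u) =
          ∫⁻ s, ENNReal.ofReal (s ^ (n + 1)) ∂(μ u) := by
        refine lintegral_congr_ae (hae.mono fun s hs => ?_)
        show ENNReal.ofReal s * ENNReal.ofReal (s ^ n) = ENNReal.ofReal (s ^ (n + 1))
        rw [← ENNReal.ofReal_mul hs, ← pow_succ']
      calc ∫⁻ s, ((fun a => ENNReal.ofReal a) * fun s => ENNReal.ofReal (s ^ n)) s ∂(μ u)
          = ∫⁻ s, (fun a => ENNReal.ofReal a) s * ENNReal.ofReal (s ^ n) ∂(μ u) := rfl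
        _ = ∫⁻ s, ENNReal.ofReal (s ^ (n + 1)) ∂(μ u) := this
        _ = ENNReal.ofReal (tv t lam (n + 1) u) := lintegral_of_isRep (hrep u) (n + 1)
    have hA : IsRepMeasure (mumap (μ u)) (fun n => tv t lam (n + 1) u) :=
      isRep_of_lintegral _ _ (fun n => tv_nonneg t lam _ u) hmA hAlint
    have Heq : mumap (μ u) = ν := (hmom u hch).2 hA hB
    -- compute the sum of the children integrals
    have hsum : (∑' v : t.chi u, ENNReal.ofReal (‖lam (v : V)‖ ^ 2) * recipInt (μ (v : V)) σ)
        = μ u (σ ∩ Set.Ioi 0) := by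
      have step1 : (∑' v : t.chi u,
          ENNReal.ofReal (‖lam (v : V)‖ ^ 2) * recipInt (μ (v : V)) σ)
          = ∫⁻ s in σ, (ENNReal.ofReal s)⁻¹ ∂ν := by
        rw [hν, Measure.restrict_sum _ hσ, lintegral_sum_measure]
        exact (tsum_congr fun v => by
          rw [Measure.restrict_smul, lintegral_smul_measure, recipInt, smul_eq_mul]).symm
      have hg : Measurable fun s : ℝ => (ENNReal.ofReal s)⁻¹ :=
        ENNReal.measurable_ofReal.inv
      rw [step1, ← Heq, mumap, restrict_withDensity hσ,
        lintegral_withDensity_eq_lintegral_mul _ ENNReal.measurable_ofReal hg]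
      have hind : ∀ s : ℝ, ((fun a => ENNReal.ofReal a) * fun s => (ENNReal.ofReal s)⁻¹) s =
          Set.indicator (Set.Ioi (0 : ℝ)) (fun _ => (1 : ℝ≥0∞)) s := by
        intro s
        show ENNReal.ofReal s * (ENNReal.ofReal s)⁻¹ = _
        by_cases hs : (0 : ℝ) < s
        · rw [Set.indicator_of_mem (Set.mem_Ioi.mpr hs),
            ENNReal.mul_inv_cancel (by simpa [ENNReal.ofReal_pos] using hs)
              ENNReal.ofReal_ne_top]
        · rw [Set.indicator_of_notMem (fun h => hs (Set.mem_Ioi.mp h)),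
            ENNReal.ofReal_eq_zero.mpr (le_of_not_gt hs), zero_mul]
      rw [lintegral_congr hind, lintegral_indicator measurableSet_Ioi,
        setLIntegral_one, Measure.restrict_apply measurableSet_Ioi, Set.inter_comm]
    have hdec : μ u σ = μ u (σ ∩ Set.Ioi 0) + μ u (σ ∩ {0}) := by
      refine le_antisymm ?_ ?_
      · have hsub : σ ⊆ (σ ∩ Set.Ioi 0) ∪ ((σ ∩ {0}) ∪ (σ ∩ Set.Iio 0)) := by
          intro x hx
          rcases lt_trichotomy x 0 with h | h | h
          · exact Or.inr (Or.inr ⟨hx, h⟩)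
          · exact Or.inr (Or.inl ⟨hx, h⟩)
          · exact Or.inl ⟨hx, h⟩
        calc μ u σ ≤ μ u ((σ ∩ Set.Ioi 0) ∪ ((σ ∩ {0}) ∪ (σ ∩ Set.Iio 0))) :=
              measure_mono hsub
          _ ≤ μ u (σ ∩ Set.Ioi 0) + (μ u (σ ∩ {0}) + μ u (σ ∩ Set.Iio 0)) :=
              le_trans (measure_union_le _ _) (by gcongr; exact measure_union_le _ _)
          _ = μ u (σ ∩ Set.Ioi 0) + μ u (σ ∩ {0}) := by
              rw [measure_mono_null Set.inter_subset_right (hIio u), add_zero]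
      · rw [← measure_union ?_ (hσ.inter (measurableSet_singleton 0))]
        · exact measure_mono (by
            rintro x (⟨h, _⟩ | ⟨h, _⟩) <;> exact h)
        · rw [Set.disjoint_left]
          rintro x ⟨_, hx1⟩ ⟨_, hx2⟩
          rw [Set.mem_singleton_iff] at hx2
          subst hx2
          exact lt_irrefl 0 (Set.mem_Ioi.mp hx1)
    have hzero : μ u (σ ∩ {0}) = ENNReal.ofReal (ε u) * Measure.dirac (0 : ℝ) σ := by
      rw [Measure.dirac_apply' _ hσ]
      by_cases h0 : (0 : ℝ) ∈ σ
      · have h1 : σ ∩ {0} = {0} :=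
          Set.inter_eq_self_of_subset_right (Set.singleton_subset_iff.mpr h0)
        rw [h1, Set.indicator_of_mem h0]
        show μ u {0} = ENNReal.ofReal ((μ u {0}).toReal) * 1
        rw [mul_one, ENNReal.ofReal_toReal (measure_ne_top (μ u) _)]
      · have h1 : σ ∩ {0} = ∅ := by
          ext x
          simp only [Set.mem_inter_iff, Set.mem_singleton_iff, Set.mem_empty_iff_false,
            iff_false, not_and]
          rintro hx rfl
          exact h0 hx
        rw [h1, measure_empty, Set.indicator_of_notMem h0, mul_zero]
    rw [hsum, hdec, hzero]
  · -- the leaf case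
    haveI : IsEmpty ↥(t.chi u) :=
      Set.isEmpty_coe_sort.mpr (Set.not_nonempty_iff_eq_empty.mp hch)
    have hμ : μ u = Measure.dirac 0 := by simp only [μ, dif_neg hch]
    have hε : ε u = 1 := by
      show (μ u {0}).toReal = 1
      rw [hμ, Measure.dirac_apply_of_mem (Set.mem_singleton 0), ENNReal.toReal_one]
    rw [tsum_empty, zero_add, hε, ENNReal.ofReal_one, one_mul, hμ]
end
end
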